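/- arXiv:1809.07230 — 6 statements merged into one kernel-verified Lean document; each statement's English description precedes it below -/
import Mathlib

section
/- det(I + g·L_N) = ∏_{k=1}^{N} (1 + 2(1 − cos((2k−1)π/(2N+1)))·g) for every complex number g. -/
open Matrix

/-- The `N×N` tridiagonal matrix with diagonal `(1,2,2,...,2)` and off-diagonal entries `-1`. -/
def Lmat (R : Type*) [Ring R] (N : ℕ) : Matrix (Fin N) (Fin N) R :=
  Matrix.of fun i j =>
    if i = j then (if (i : ℕ) = 0 then 1 else 2)
    else if (i : ℕ) + 1 = (j : ℕ) ∨ (j : ℕ) + 1 = (i : ℕ) then -1 else 0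

/-- The `N×N` tridiagonal matrix with diagonal `2` and off-diagonal entries `-1`. -/
def Lbar (R : Type*) [Ring R] (N : ℕ) : Matrix (Fin N) (Fin N) R :=
  Matrix.of fun i j =>
    if i = j then 2
    else if (i : ℕ) + 1 = (j : ℕ) ∨ (j : ℕ) + 1 = (i : ℕ) then -1 else 0

/-- `μ` is an eigenvalue of the matrix `A`. -/
def IsEig {R : Type*} [CommRing R] {N : ℕ} (A : Matrix (Fin N) (Fin N) R) (μ : R) : Prop :=
  ∃ v : Fin N → R, v ≠ 0 ∧ A.mulVec v = μ • v

namespace DetAux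

open Finset Complex Polynomial

variable {R : Type*} [CommRing R]

lemma det_expand {n : ℕ} (M : Matrix (Fin (n+2)) (Fin (n+2)) R)
    (hrow : ∀ j : Fin n, M 0 j.succ.succ = 0) (hcol : ∀ i : Fin n, M i.succ.succ 0 = 0) :
    M.det = M 0 0 * (M.submatrix Fin.succ Fin.succ).det
      - M 0 1 * M 1 0 * (M.submatrix (Fin.succ ∘ Fin.succ) (Fin.succ ∘ Fin.succ)).det := by
  have hminor : (M.submatrix Fin.succ (Fin.succAbove 1)).det
      = M 1 0 * (M.submatrix (Fin.succ ∘ Fin.succ) (Fin.succ ∘ Fin.succ)).det := by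
    rw [Matrix.det_succ_column_zero, Fin.sum_univ_succ]
    have h0 : ∑ i : Fin n, (-1 : R) ^ ((i.succ : Fin (n+1)) : ℕ) *
        (M.submatrix Fin.succ (Fin.succAbove 1)) i.succ 0 *
        ((M.submatrix Fin.succ (Fin.succAbove 1)).submatrix i.succ.succAbove Fin.succ).det = 0 := by
      apply Finset.sum_eq_zero; intro i _
      have : (M.submatrix Fin.succ (Fin.succAbove 1)) i.succ 0 = 0 := by
        have h1 : (1 : Fin (n+2)).succAbove 0 = 0 := by
          rw [← Fin.succ_zero_eq_one, Fin.succ_succAbove_zero]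
        simp [Matrix.submatrix_apply, h1, hcol i]
      rw [this]; ring
    rw [h0, add_zero]
    have hfun : (1 : Fin (n+2)).succAbove ∘ Fin.succ = Fin.succ ∘ Fin.succ := by
      funext k
      simp only [Function.comp_apply, ← Fin.succ_zero_eq_one, Fin.succ_succAbove_succ,
        Fin.zero_succAbove]
    have h1 : (1 : Fin (n+2)).succAbove 0 = 0 := by
      rw [← Fin.succ_zero_eq_one, Fin.succ_succAbove_zero]
    simp [Matrix.submatrix_submatrix, Fin.succAbove_zero, hfun, h1]
  rw [Matrix.det_succ_row_zero, Fin.sum_univ_succ, Fin.sum_univ_succ]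
  have h1 : ∑ j : Fin n, (-1 : R) ^ (((j.succ.succ : Fin (n+2))) : ℕ) * M 0 j.succ.succ *
      (M.submatrix Fin.succ (Fin.succAbove j.succ.succ)).det = 0 := by
    apply Finset.sum_eq_zero; intro j _
    rw [hrow j]; ring
  rw [h1, add_zero, Fin.succ_zero_eq_one, hminor]
  simp [Fin.succAbove_zero]
  ring

variable (g : R)

lemma Lbar_sub (n : ℕ) :
    (1 + g • Lbar R (n+1)).submatrix Fin.succ Fin.succ = 1 + g • Lbar R n := by
  ext i j
  simp only [Matrix.submatrix_apply, Matrix.add_apply, Matrix.smul_apply, Matrix.one_apply,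
    Lbar, Matrix.of_apply, Fin.succ_inj, Fin.val_succ]
  have h2 : ((i:ℕ) + 1 + 1 = (j:ℕ) + 1 ∨ (j:ℕ) + 1 + 1 = (i:ℕ) + 1) ↔ ((i:ℕ) + 1 = (j:ℕ) ∨ (j:ℕ) + 1 = (i:ℕ)) := by omega
  simp only [h2]

lemma Lmat_sub (n : ℕ) :
    (1 + g • Lmat R (n+1)).submatrix Fin.succ Fin.succ = 1 + g • Lbar R n := by
  ext i j
  simp only [Matrix.submatrix_apply, Matrix.add_apply, Matrix.smul_apply, Matrix.one_apply,
    Lmat, Lbar, Matrix.of_apply, Fin.succ_inj, Fin.val_succ]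
  by_cases h : i = j
  · simp [h]
  · simp only [h, if_false]
    have h2 : ((i:ℕ) + 1 + 1 = (j:ℕ) + 1 ∨ (j:ℕ) + 1 + 1 = (i:ℕ) + 1) ↔ ((i:ℕ) + 1 = (j:ℕ) ∨ (j:ℕ) + 1 = (i:ℕ)) := by omega
    simp only [h2]

lemma detLbar_rec (n : ℕ) : (1 + g • Lbar R (n+2)).det
    = (1 + 2*g) * (1 + g • Lbar R (n+1)).det - g^2 * (1 + g • Lbar R n).det := by
  rw [det_expand]
  · rw [show Fin.succ ∘ Fin.succ = (Fin.succ ∘ Fin.succ : Fin n → Fin (n+2)) from rfl,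
      ← Matrix.submatrix_submatrix, Lbar_sub, Lbar_sub]
    have h00 : (1 + g • Lbar R (n+2)) 0 0 = 1 + 2*g := by
      simp [Lbar, Matrix.one_apply]; ring
    have h01 : (1 + g • Lbar R (n+2)) 0 1 = -g := by
      simp [Lbar, Matrix.one_apply]
    have h10 : (1 + g • Lbar R (n+2)) 1 0 = -g := by
      simp [Lbar, Matrix.one_apply]
    rw [h00, h01, h10]; ring
  · intro j
    simp [Lbar, Matrix.one_apply, (Fin.succ_ne_zero _).symm]
  · intro i
    simp [Lbar, Matrix.one_apply, Fin.ext_iff]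

lemma detLmat_rec (n : ℕ) : (1 + g • Lmat R (n+2)).det
    = (1 + g) * (1 + g • Lbar R (n+1)).det - g^2 * (1 + g • Lbar R n).det := by
  rw [det_expand]
  · rw [show Fin.succ ∘ Fin.succ = (Fin.succ ∘ Fin.succ : Fin n → Fin (n+2)) from rfl,
      ← Matrix.submatrix_submatrix, Lmat_sub, Lbar_sub]
    have h00 : (1 + g • Lmat R (n+2)) 0 0 = 1 + g := by
      simp [Lmat, Matrix.one_apply]
    have h01 : (1 + g • Lmat R (n+2)) 0 1 = -g := by
      simp [Lmat, Matrix.one_apply]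
    have h10 : (1 + g • Lmat R (n+2)) 1 0 = -g := by
      simp [Lmat, Matrix.one_apply]
    rw [h00, h01, h10]; ring
  · intro j
    simp [Lmat, Matrix.one_apply, (Fin.succ_ne_zero _).symm]
  · intro i
    simp [Lmat, Matrix.one_apply]

noncomputable section
open Complex

def BB (z : ℂ) (n : ℕ) : ℂ := ∑ j ∈ Finset.range (n+1), z^(2*j)

def AA (z : ℂ) (n : ℕ) : ℂ := ∑ j ∈ Finset.range (2*n+1), (-z)^j

lemma BB_succ (z : ℂ) (n : ℕ) : BB z (n+1) = z^2 * BB z n + 1 := by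
  unfold BB
  rw [Finset.sum_range_succ', Finset.mul_sum]
  refine congrArg₂ (·+·) (Finset.sum_congr rfl fun i _ => by ring) (by norm_num)

lemma BB_succ' (z : ℂ) (n : ℕ) : BB z (n+1) = BB z n + z^(2*n+2) := by
  rw [BB, Finset.sum_range_succ]
  rw [show 2*(n+1) = 2*n+2 by ring]
  rfl

lemma AA_eq (z : ℂ) (n : ℕ) : AA z (n+1) = BB z (n+1) - z * BB z n := by
  induction n with
  | zero => simp [AA, BB, Finset.sum_range_succ]; ring
  | succ m ih =>
    have h1 : AA z (m+2) = AA z (m+1) + (-z)^(2*m+3) + (-z)^(2*m+3+1) := by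
      unfold AA
      rw [show 2*(m+2)+1 = (2*m+3) + 1 + 1 by ring, Finset.sum_range_succ,
        Finset.sum_range_succ, show 2*(m+1)+1 = 2*m+3 by ring]
    have hodd : (-z)^(2*m+3) = -z^(2*m+3) := Odd.neg_pow ⟨m+1, by ring⟩ z
    have heven : (-z)^(2*m+3+1) = z^(2*m+3+1) := Even.neg_pow ⟨m+2, by ring⟩ z
    rw [hodd, heven] at h1
    linear_combination h1 + ih - BB_succ' z (m+1) + z * BB_succ' z m

variable (z gg : ℂ)

lemma Ekey (hz : gg * (z-1)^2 = z) :
    ∀ n : ℕ, z^n * (1 + gg • Lbar ℂ n).det = gg^n * BB z n := by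
  intro n
  induction n using Nat.twoStepInduction with
  | zero => simp [BB]
  | one =>
    rw [Matrix.det_fin_one]
    have : (1 + gg • Lbar ℂ 1) 0 0 = 1 + 2*gg := by
      simp [Lbar, Matrix.one_apply]; ring
    rw [this]
    simp only [BB]
    rw [Finset.sum_range_succ, Finset.sum_range_succ]
    linear_combination -hz
  | more n ih2 ih1 =>
    rw [detLbar_rec]
    linear_combination ((1+2*gg)*z) * ih1 - (gg^2*z^2) * ih2
      - gg^(n+2) * (BB_succ z (n+1)) + gg^(n+2) * (BB_succ z n)
      - gg^(n+1) * (BB z (n+1)) * hz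

lemma Dkey (hz : gg * (z-1)^2 = z) :
    ∀ n : ℕ, z^n * (1 + gg • Lmat ℂ n).det = gg^n * AA z n := by
  intro n
  match n with
  | 0 => simp [AA]
  | 1 =>
    rw [Matrix.det_fin_one]
    have : (1 + gg • Lmat ℂ 1) 0 0 = 1 + gg := by
      simp [Lmat, Matrix.one_apply]
    rw [this]
    simp only [AA]
    rw [Finset.sum_range_succ, Finset.sum_range_succ, Finset.sum_range_succ]
    linear_combination -hz
  | (n+2) =>
    rw [detLmat_rec]
    linear_combination ((1+gg)*z) * (Ekey z gg hz (n+1)) - gg^2*z^2 * (Ekey z gg hz n)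
      - gg^(n+2) * (AA_eq z (n+1)) - gg^(n+2) * (BB_succ z (n+1)) + gg^(n+2) * (BB_succ z n)
      - gg^(n+1) * (BB z (n+1)) * hz
lemma prod_exp (z : ℂ) (N : ℕ) :
    ∏ j ∈ Finset.range (2*N+1), (z - Complex.exp ((2*(j:ℂ)+1) * Real.pi * I / (2*N+1)))
      = z^(2*N+1) + 1 := by
  set n : ℕ := 2*N+1 with hn
  have hnn : (n:ℂ) ≠ 0 := Nat.cast_ne_zero.mpr (by omega)
  set c : ℂ := Complex.exp (Real.pi * I / n) with hc
  set ζ : ℂ := Complex.exp (2 * Real.pi * I / n) with hζ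
  have hprim : IsPrimitiveRoot ζ n := Complex.isPrimitiveRoot_exp n (by omega)
  have hcn : c ^ n = -1 := by
    rw [hc, ← Complex.exp_nat_mul,
      show (n : ℂ) * (Real.pi * I / n) = Real.pi * I by field_simp,
      Complex.exp_pi_mul_I]
  have hpoly := X_pow_sub_C_eq_prod hprim (by omega : 0 < n) hcn
  have heval := congrArg (Polynomial.eval z) hpoly
  rw [Polynomial.eval_sub, Polynomial.eval_pow, Polynomial.eval_X, Polynomial.eval_C,
    Polynomial.eval_prod] at heval
  simp only [Polynomial.eval_sub, Polynomial.eval_X, Polynomial.eval_C] at heval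
  rw [show z^n + 1 = z^n - (-1) by ring, heval]
  apply Finset.prod_congr rfl
  intro j _
  congr 1
  rw [hc, hζ, ← Complex.exp_nat_mul, ← Complex.exp_add]
  congr 1
  rw [show ((2:ℂ)*N+1) = (n:ℂ) by push_cast [hn]; ring]
  field_simp

lemma AA_mul (z : ℂ) (N : ℕ) : (z+1) * AA z N = z^(2*N+1) + 1 := by
  have h := geom_sum_mul (-z) (2*N+1)
  have hodd : (-z)^(2*N+1) = -z^(2*N+1) := Odd.neg_pow ⟨N, by ring⟩ z
  rw [hodd] at h
  unfold AA
  linear_combination -h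

lemma quad_eq (z : ℂ) (θ : ℝ) :
    z^2 - 2*z*((Real.cos θ : ℝ) : ℂ) + 1
      = (z - Complex.exp (θ * I)) * (z - Complex.exp (-(θ:ℂ) * I)) := by
  have h := Complex.two_cos (x := (θ:ℂ))
  have hm : Complex.exp ((θ:ℂ) * I) * Complex.exp (-(θ:ℂ) * I) = 1 := by
    rw [← Complex.exp_add, show (θ:ℂ)*I + -(θ:ℂ)*I = 0 by ring, Complex.exp_zero]
  rw [Complex.ofReal_cos]
  linear_combination (-z)*h - hm

lemma prod_Icc_aux (F : ℕ → ℂ) (N : ℕ) :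
    ∏ k ∈ Finset.Icc 1 N, F k = ∏ i ∈ Finset.range N, F (1+i) := by
  rw [← Finset.Ico_add_one_right_eq_Icc, Finset.prod_Ico_eq_prod_range]
  simp

lemma prod_quad (z : ℂ) (N : ℕ) (h1 : z + 1 ≠ 0) :
    ∏ k ∈ Finset.Icc 1 N,
        (z^2 - 2*z*((Real.cos ((2*(k:ℝ)-1) * Real.pi / (2*(N:ℝ)+1)) : ℝ) : ℂ) + 1)
      = AA z N := by
  have hden : ((2:ℂ)*(N:ℂ)+1) ≠ 0 := by
    have : ((2*N+1 : ℕ) : ℂ) ≠ 0 := Nat.cast_ne_zero.mpr (by omega)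
    push_cast at this
    exact this
  set f : ℕ → ℂ := fun j => z - Complex.exp ((2*(j:ℂ)+1) * Real.pi * I / (2*N+1)) with hf
  apply mul_left_cancel₀ h1
  rw [AA_mul, ← prod_exp z N]
  -- split range (2N+1)
  have hsplit : ∏ j ∈ Finset.range (2*N+1), f j
      = (∏ i ∈ Finset.range N, f i) * ((∏ i ∈ Finset.range N, f (N+1+i)) * f N) := by
    rw [show 2*N+1 = N + (N+1) by ring, Finset.prod_range_add]
    congr 1
    rw [Finset.prod_range_succ']
    congr 1
    exact Finset.prod_congr rfl fun i _ => by rw [show N+(i+1) = N+1+i by omega]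
  have hfN : f N = z + 1 := by
    have harg : (2*(N:ℂ)+1) * Real.pi * I / (2*(N:ℂ)+1) = Real.pi * I := by
      field_simp
    rw [hf]
    simp only
    rw [harg, Complex.exp_pi_mul_I]
    ring
  have hfirst : ∏ i ∈ Finset.range N, f i
      = ∏ k ∈ Finset.Icc 1 N,
          (z - Complex.exp ((((2*(k:ℝ)-1) * Real.pi / (2*(N:ℝ)+1) : ℝ) : ℂ) * I)) := by
    rw [prod_Icc_aux]
    apply Finset.prod_congr rfl
    intro i _
    rw [hf]
    simp only
    congr 2
    push_cast
    ring
  have hsecond : ∏ i ∈ Finset.range N, f (N+1+i)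
      = ∏ k ∈ Finset.Icc 1 N,
          (z - Complex.exp (-(((2*(k:ℝ)-1) * Real.pi / (2*(N:ℝ)+1) : ℝ) : ℂ) * I)) := by
    rw [prod_Icc_aux]
    conv_rhs => rw [← Finset.prod_range_reflect]
    apply Finset.prod_congr rfl
    intro i hi
    rw [Finset.mem_range] at hi
    rw [hf]
    simp only
    congr 1
    rw [show 1 + (N - 1 - i) = N - i by omega]
    have harg : (2*((N+1+i : ℕ):ℂ)+1) * Real.pi * I / (2*(N:ℂ)+1)
        = -(((2*((N-i : ℕ):ℝ)-1) * Real.pi / (2*(N:ℝ)+1) : ℝ) : ℂ) * I + 2*Real.pi*I := by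
      push_cast [Nat.cast_sub (by omega : i ≤ N)]
      field_simp
      ring
    rw [harg, Complex.exp_add, Complex.exp_two_pi_mul_I, mul_one]
  calc (z+1) * ∏ k ∈ Finset.Icc 1 N,
        (z^2 - 2*z*((Real.cos ((2*(k:ℝ)-1) * Real.pi / (2*(N:ℝ)+1)) : ℝ) : ℂ) + 1)
      = (z+1) * ∏ k ∈ Finset.Icc 1 N,
          ((z - Complex.exp ((((2*(k:ℝ)-1) * Real.pi / (2*(N:ℝ)+1) : ℝ) : ℂ) * I)) *
           (z - Complex.exp (-(((2*(k:ℝ)-1) * Real.pi / (2*(N:ℝ)+1) : ℝ) : ℂ) * I))) := by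
        exact congrArg ((z+1) * ·)
          (Finset.prod_congr rfl fun k _ => quad_eq z ((2*(k:ℝ)-1) * Real.pi / (2*(N:ℝ)+1)))
    _ = ∏ j ∈ Finset.range (2*N+1), f j := by
        rw [Finset.prod_mul_distrib, hsplit, hfN, ← hfirst, ← hsecond]
        ring

lemma key (N : ℕ) (z gg : ℂ) (hz0 : z ≠ 0) (hz1 : z + 1 ≠ 0) (hz : gg*(z-1)^2 = z) :
    (1 + gg • Lmat ℂ N).det
      = ∏ k ∈ Finset.Icc 1 N,
          (1 + 2*(1 - ((Real.cos ((2*(k:ℝ)-1) * Real.pi / (2*(N:ℝ)+1)) : ℝ) : ℂ))*gg) := by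
  apply mul_left_cancel₀ (pow_ne_zero N hz0)
  rw [Dkey z gg hz N]
  have hcard : (Finset.Icc 1 N).card = N := by rw [Nat.card_Icc]; omega
  have hzpow : (z:ℂ)^N = ∏ _k ∈ Finset.Icc 1 N, z := by rw [Finset.prod_const, hcard]
  conv_rhs => rw [hzpow, ← Finset.prod_mul_distrib]
  have hfac : ∀ k ∈ Finset.Icc 1 N,
      z * (1 + 2*(1 - ((Real.cos ((2*(k:ℝ)-1) * Real.pi / (2*(N:ℝ)+1)) : ℝ) : ℂ))*gg)
        = gg * (z^2 - 2*z*((Real.cos ((2*(k:ℝ)-1) * Real.pi / (2*(N:ℝ)+1)) : ℝ) : ℂ) + 1) :=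
    fun k _ => by linear_combination -hz
  rw [Finset.prod_congr rfl hfac, Finset.prod_mul_distrib, Finset.prod_const, hcard,
    prod_quad z N hz1]

lemma good (N : ℕ) (g : ℂ) (hg : g ≠ 0) (h4 : 1 + 4*g ≠ 0) :
    (1 + g • Lmat ℂ N).det
      = ∏ k ∈ Finset.Icc 1 N,
          (1 + 2*(1 - ((Real.cos ((2*(k:ℝ)-1) * Real.pi / (2*(N:ℝ)+1)) : ℝ) : ℂ))*g) := by
  obtain ⟨s, hs⟩ := IsAlgClosed.exists_pow_nat_eq (1+4*g) (by norm_num : 0 < 2)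
  have h2g : (2*g) ≠ 0 := by simpa using hg
  set z : ℂ := (1+2*g+s)/(2*g) with hzdef
  have hz : g*(z-1)^2 = z := by
    rw [hzdef]
    field_simp
    ring_nf
    linear_combination hs
  have hz0 : z ≠ 0 := by
    intro h
    apply hg
    rw [h] at hz
    simpa using hz
  have hz1 : z + 1 ≠ 0 := by
    intro h
    apply h4
    have hzm : z = -1 := by linear_combination h
    rw [hzm] at hz
    linear_combination hz
  exact key N z g hz0 hz1 hz

end

end DetAux

/-- `det(I + g·L_N) = ∏_{k=1}^N (1 + 2(1 - cos((2k-1)π/(2N+1)))·g)`. -/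
theorem det_one_add_smul_Lmat (N : ℕ) (g : ℂ) :
    Matrix.det (1 + g • Lmat ℂ N)
      = ∏ k ∈ Finset.Icc 1 N,
          (1 + 2 * (1 - (Real.cos ((2 * (k : ℝ) - 1) * Real.pi / (2 * N + 1)) : ℂ)) * g) := by
  classical
  set p : Polynomial ℂ := (1 + (Polynomial.X : Polynomial ℂ) • Lmat (Polynomial ℂ) N).det with hp
  set q : Polynomial ℂ := ∏ k ∈ Finset.Icc 1 N,
      (1 + Polynomial.C (2 * (1 - (Real.cos ((2 * (k : ℝ) - 1) * Real.pi / (2 * N + 1)) : ℂ)))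
        * Polynomial.X) with hq
  have hpev : ∀ x : ℂ, p.eval x = (1 + x • Lmat ℂ N).det := by
    intro x
    have hm := RingHom.map_det (Polynomial.evalRingHom x)
      (1 + (Polynomial.X : Polynomial ℂ) • Lmat (Polynomial ℂ) N)
    have hmap : (1 + (Polynomial.X : Polynomial ℂ) • Lmat (Polynomial ℂ) N).map
        (Polynomial.evalRingHom x) = 1 + x • Lmat ℂ N := by
      ext i j
      simp [Lmat, Matrix.map_apply, Matrix.one_apply, apply_ite (Polynomial.eval x)]
    rw [RingHom.mapMatrix_apply, hmap] at hm
    rw [hp]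
    exact hm
  have hqev : ∀ x : ℂ, q.eval x = ∏ k ∈ Finset.Icc 1 N,
      (1 + 2 * (1 - (Real.cos ((2 * (k : ℝ) - 1) * Real.pi / (2 * N + 1)) : ℂ)) * x) := by
    intro x
    rw [hq, Polynomial.eval_prod]
    exact Finset.prod_congr rfl fun k _ => by simp
  have hpq : p = q := by
    apply Polynomial.eq_of_infinite_eval_eq
    apply Set.Infinite.mono (s := ({0, -(1/4)} : Set ℂ)ᶜ)
    · intro x hx
      simp only [Set.mem_compl_iff, Set.mem_insert_iff, Set.mem_singleton_iff, not_or] at hx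
      obtain ⟨hx0, hx4⟩ := hx
      have h4 : 1 + 4*x ≠ 0 := fun h => hx4 (by linear_combination (1/4) * h)
      simp only [Set.mem_setOf_eq]
      rw [hpev, hqev]
      exact DetAux.good N x hx0 h4
    · exact Set.Finite.infinite_compl (Set.toFinite _)
  rw [← hpev g, hpq, hqev g]
end

section
/- Let g be a nonzero complex number and let ζ satisfy ζ² − (1/g + 2)ζ + 1 = 0 with |ζ| < 1. Then the (1,1) entry of (I + g·L_N)^{-1} equals (1 − ζ)·(1 − ζ^{2N})/(1 + ζ^{2N+1}). -/
open Matrix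

lemma Lmat_mulVec_apply (N : ℕ) (w : ℕ → ℂ) (i : Fin N) :
    (Lmat ℂ N *ᵥ fun j : Fin N => w j) i
      = (if (i : ℕ) = 0 then 1 else 2) * w i
        - (if (i : ℕ) + 1 < N then w ((i : ℕ) + 1) else 0)
        - (if (i : ℕ) = 0 then 0 else w ((i : ℕ) - 1)) := by
  classical
  have hsplit : ∀ j : Fin N,
      Lmat ℂ N i j * w j
        = (if i = j then (if (i : ℕ) = 0 then 1 else 2) * w j else 0)
          + (if (i : ℕ) + 1 = (j : ℕ) then -w j else 0)
          + (if (j : ℕ) + 1 = (i : ℕ) then -w j else 0) := by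
    intro j
    simp only [Lmat, Matrix.of_apply]
    by_cases h : i = j
    · subst h
      simp only [if_pos rfl]
      have h1 : ¬ ((i : ℕ) + 1 = (i : ℕ)) := by omega
      simp [h1]
    · have h2 : (i : ℕ) ≠ (j : ℕ) := fun hc => h (Fin.ext hc)
      simp only [if_neg h]
      by_cases ha : (i : ℕ) + 1 = (j : ℕ)
      · have hb : ¬ ((j : ℕ) + 1 = (i : ℕ)) := by omega
        simp [ha, hb]
      · by_cases hb : (j : ℕ) + 1 = (i : ℕ)
        · simp [ha, hb]
        · simp [ha, hb]
  simp only [Matrix.mulVec, dotProduct]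
  rw [Finset.sum_congr rfl fun j _ => hsplit j]
  rw [Finset.sum_add_distrib, Finset.sum_add_distrib]
  have s1 : ∑ j : Fin N, (if i = j then (if (i : ℕ) = 0 then 1 else 2) * w j else 0)
      = (if (i : ℕ) = 0 then 1 else 2) * w i := by
    rw [Finset.sum_ite_eq]; simp
  have s2 : ∑ j : Fin N, (if (i : ℕ) + 1 = (j : ℕ) then -w (j : ℕ) else 0)
      = -(if (i : ℕ) + 1 < N then w ((i : ℕ) + 1) else 0) := by
    rw [Fin.sum_univ_eq_sum_range (fun n => if (i : ℕ) + 1 = n then -w n else 0) N]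
    rw [Finset.sum_ite_eq]
    simp only [Finset.mem_range]
    split_ifs <;> simp
  have s3 : ∑ j : Fin N, (if (j : ℕ) + 1 = (i : ℕ) then -w (j : ℕ) else 0)
      = -(if (i : ℕ) = 0 then 0 else w ((i : ℕ) - 1)) := by
    rw [Fin.sum_univ_eq_sum_range (fun n => if n + 1 = (i : ℕ) then -w n else 0) N]
    by_cases h0 : (i : ℕ) = 0
    · rw [h0]; simp
    · obtain ⟨m, hm⟩ : ∃ m, (i : ℕ) = m + 1 := ⟨(i : ℕ) - 1, by omega⟩
      have hmlt : m ∈ Finset.range N := Finset.mem_range.mpr (by have := i.isLt; omega)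
      rw [hm]
      have : ∀ n : ℕ, (n + 1 = m + 1) ↔ (m = n) := by intro n; omega
      simp_rw [this]
      rw [Finset.sum_ite_eq (Finset.range N) m (fun n => -w n)]
      rw [if_pos hmlt]
      simp
  rw [s1, s2, s3]; ring

/-- If `ζ` is the root of `ζ² − (1/g + 2)ζ + 1 = 0` with `|ζ| < 1`, then the `(1,1)`
entry of `(I + g·L_N)⁻¹` equals `(1 − ζ)(1 − ζ^{2N})/(1 + ζ^{2N+1})`. -/
theorem inv_entry_eq_zeta_formula (N : ℕ) (hN : 0 < N) (g : ℂ) (hg : g ≠ 0) (ζ : ℂ)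
    (hroot : ζ ^ 2 - (1 / g + 2) * ζ + 1 = 0) (hζ : ‖ζ‖ < 1)
    (hinv : IsUnit (1 + g • Lmat ℂ N)) :
    (1 + g • Lmat ℂ N)⁻¹ ⟨0, hN⟩ ⟨0, hN⟩
      = (1 - ζ) * (1 - ζ ^ (2 * N)) / (1 + ζ ^ (2 * N + 1)) := by
  classical
  have hz0 : ζ ≠ 0 := by
    intro h; rw [h] at hroot; simp at hroot
  have hden : (1 : ℂ) + ζ ^ (2 * N) * ζ ≠ 0 := by
    intro h
    have h1 : ζ ^ (2 * N + 1) = -1 := by rw [pow_succ]; linear_combination h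
    have h2 : ‖ζ ^ (2 * N + 1)‖ = 1 := by rw [h1]; simp
    rw [norm_pow] at h2
    have hlt : ‖ζ‖ ^ (2 * N + 1) < 1 :=
      pow_lt_one₀ (norm_nonneg _) hζ (by omega)
    linarith
  have hg2 : g * (ζ - 1) ^ 2 = ζ := by
    field_simp at hroot
    linear_combination hroot
  -- auxiliary quantities
  set ξ : ℂ := ζ⁻¹ with hξdef
  have hξ : ζ * ξ = 1 := mul_inv_cancel₀ hz0
  have hg2x : g * (ξ - 1) ^ 2 = ξ := by
    linear_combination ξ ^ 2 * hg2 + (g * (2 * ξ - ζ * ξ - 1) + ξ) * hξ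
  set Z : ℂ := ζ ^ (2 * N) with hZ
  set E : ℂ := (1 + Z * ζ)⁻¹ with hEdef
  have hE : (1 + Z * ζ) * E = 1 := mul_inv_cancel₀ hden
  set w : ℕ → ℂ := fun n => (1 - ζ) * E * (ζ ^ n - Z * ξ ^ n) with hw
  have hwN : w N = 0 := by
    have h1 : Z = ζ ^ N * ζ ^ N := by rw [hZ, two_mul, pow_add]
    have h2 : ξ ^ N = (ζ ^ N)⁻¹ := by rw [hξdef, inv_pow]
    simp only [hw, h1, h2]
    rw [mul_assoc (ζ ^ N), mul_inv_cancel₀ (pow_ne_zero N hz0)]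
    ring
  clear_value w E Z ξ
  set i0 : Fin N := ⟨0, hN⟩ with hi0
  have hkey : (1 + g • Lmat ℂ N) *ᵥ (fun j : Fin N => w j) = Pi.single i0 1 := by
    funext i
    rw [Matrix.add_mulVec, Matrix.one_mulVec, Matrix.smul_mulVec]
    have hLi := Lmat_mulVec_apply N w i
    have hb : (if (i : ℕ) + 1 < N then w ((i : ℕ) + 1) else 0) = w ((i : ℕ) + 1) := by
      by_cases h : (i : ℕ) + 1 < N
      · rw [if_pos h]
      · have : (i : ℕ) + 1 = N := by have := i.isLt; omega
        rw [if_neg h, this, hwN]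
    rw [hb] at hLi
    simp only [Pi.add_apply, Pi.smul_apply, smul_eq_mul, hLi]
    by_cases h0 : (i : ℕ) = 0
    · have hii : i = i0 := Fin.ext (by simp [hi0, h0])
      subst hii
      rw [Pi.single_eq_same]
      have h00 : (i0 : ℕ) = 0 := rfl
      rw [h00]
      simp only [if_pos rfl]
      simp only [hw, pow_zero, pow_one, zero_add, if_true]
      norm_num
      linear_combination hE + E * (1 + Z * ξ) * hg2 + E * Z * (1 + g * (1 - ζ)) * hξ
    · have hne : i ≠ i0 := by
        intro h; rw [h] at h0; simp [hi0] at h0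
      rw [Pi.single_eq_of_ne hne]
      obtain ⟨k, hk⟩ : ∃ k, (i : ℕ) = k + 1 := ⟨(i : ℕ) - 1, by omega⟩
      rw [if_neg h0, if_neg h0, hk]
      have hk1 : k + 1 - 1 = k := by omega
      rw [hk1]
      simp only [hw]
      linear_combination (-((1 - ζ) * E * ζ ^ k)) * hg2
        + ((1 - ζ) * E * Z * ξ ^ k) * hg2x
  have hdet : IsUnit (1 + g • Lmat ℂ N).det :=
    (Matrix.isUnit_iff_isUnit_det _).mp hinv
  have hMinv : (1 + g • Lmat ℂ N)⁻¹ * (1 + g • Lmat ℂ N) = 1 :=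
    Matrix.nonsing_inv_mul _ hdet
  have hv : (1 + g • Lmat ℂ N)⁻¹ *ᵥ ((1 + g • Lmat ℂ N) *ᵥ (fun j : Fin N => w j))
      = (fun j : Fin N => w j) := by
    rw [Matrix.mulVec_mulVec, hMinv, Matrix.one_mulVec]
  rw [hkey] at hv
  have hfin := congrFun hv i0
  rw [Matrix.mulVec_single] at hfin
  have hfin' : (1 + g • Lmat ℂ N)⁻¹ i0 i0 * 1 = w (i0 : ℕ) := hfin
  rw [mul_one] at hfin'
  rw [hfin']
  show w 0 = _
  simp only [hw, pow_zero, mul_one]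
  rw [hEdef, hZ, div_eq_mul_inv]
  rw [pow_succ]
  ring
end

section
/- If z is a complex number in the open right half-plane that is a pole of S_N(s) = [(I + P(s)C(s)L_N)^{-1}]_{1,1} for some N, then P(z)C(z)·λ = −1 for some eigenvalue λ of L_N; conversely, if det(I + P(s)C(s)L_N) vanishes at z ∈ ℂ₊, then −1/(P(z)C(z)) is an eigenvalue of L_N. -/
open Matrix

set_option synthInstance.maxHeartbeats 1000000
set_option maxHeartbeats 1000000

open Filter

/-- Upper bidiagonal matrix with `-1` on the superdiagonal. -/
def Smat (R : Type*) [Ring R] (N : ℕ) : Matrix (Fin N) (Fin N) R :=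
  Matrix.of fun i j => if (i : ℕ) + 1 = (j : ℕ) then -1 else 0

lemma StS (R : Type*) [CommRing R] (N : ℕ) :
    (Smat R N)ᵀ * Smat R N =
      Matrix.of (fun (i j : Fin N) => if i = j ∧ (i : ℕ) ≠ 0 then 1 else 0) := by
  ext i j
  simp only [Matrix.mul_apply, transpose_apply, Smat, of_apply]
  by_cases hij : i = j
  · subst hij
    by_cases hi : (i : ℕ) = 0
    · rw [Finset.sum_eq_zero]
      · simp [hi]
      · intro k _
        have : (k : ℕ) + 1 ≠ (i : ℕ) := by omega
        simp [this]
    · have hlt : (i : ℕ) - 1 < N := by omega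
      rw [Finset.sum_eq_single ⟨(i : ℕ) - 1, hlt⟩]
      · have : ((⟨(i : ℕ) - 1, hlt⟩ : Fin N) : ℕ) + 1 = (i : ℕ) := by simp; omega
        simp [this, hi]
      · intro k _ hk
        have : (k : ℕ) + 1 ≠ (i : ℕ) := by
          intro hc
          apply hk
          apply Fin.ext
          simp
          omega
        simp [this]
      · intro hmem
        exact absurd (Finset.mem_univ _) hmem
  · rw [Finset.sum_eq_zero]
    · simp [hij]
    · intro k _
      by_cases h1 : (k : ℕ) + 1 = (i : ℕ)
      · have h2 : (k : ℕ) + 1 ≠ (j : ℕ) := by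
          intro hc
          exact hij (Fin.ext (by omega))
        simp [h2]
      · simp [h1]

lemma Lmat_eq_factor (R : Type*) [CommRing R] (N : ℕ) :
    Lmat R N = (1 + Smat R N)ᵀ * (1 + Smat R N) := by
  have expand : (1 + Smat R N)ᵀ * (1 + Smat R N)
      = 1 + Smat R N + (Smat R N)ᵀ + (Smat R N)ᵀ * Smat R N := by
    rw [transpose_add, transpose_one]
    noncomm_ring
  rw [expand, StS]
  ext i j
  by_cases hij : i = j
  · subst hij
    by_cases hi : (i : ℕ) = 0 <;>
      simp [Lmat, Smat, Matrix.add_apply, Matrix.one_apply, hi] <;> ring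
  · have hij' : (i : ℕ) ≠ (j : ℕ) := fun hc => hij (Fin.ext hc)
    simp only [Lmat, Smat, Matrix.add_apply, Matrix.one_apply, of_apply, if_neg hij,
      if_neg (fun hc : i = j ∧ (i:ℕ) ≠ 0 => hij hc.1)]
    by_cases h1 : (i : ℕ) + 1 = (j : ℕ)
    · have h2 : (j : ℕ) + 1 ≠ (i : ℕ) := by omega
      simp [h1, h2, hij]
    · by_cases h2 : (j : ℕ) + 1 = (i : ℕ)
      · simp [h1, h2, hij]
      · simp [h1, h2, hij]

lemma det_Lmat (R : Type*) [CommRing R] (N : ℕ) : (Lmat R N).det = 1 := by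
  rw [Lmat_eq_factor, det_mul, det_transpose]
  have h : (1 + Smat R N).det = 1 := by
    rw [Matrix.det_of_upperTriangular]
    · rw [Finset.prod_eq_one]
      intro i _
      simp [Matrix.add_apply, Matrix.one_apply, Smat]
    · intro i j hij
      have h1 : i ≠ j := by intro hc; subst hc; exact lt_irrefl _ hij
      have h2 : (i : ℕ) + 1 ≠ (j : ℕ) := by
        have : (j : ℕ) < (i : ℕ) := hij
        omega
      rw [Matrix.add_apply, Matrix.one_apply_ne h1]
      simp [Smat, h2]
  rw [h, mul_one]

lemma map_Lmat {R S : Type*} [Ring R] [Ring S] (f : R →+* S) (N : ℕ) :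
    (Lmat R N).map f = Lmat S N := by
  ext i j
  simp only [Lmat, Matrix.map_apply, of_apply]
  split_ifs <;> simp [map_ofNat]

lemma mapMatrix_smul {R S : Type*} [CommRing R] [CommRing S] {N : ℕ} (f : R →+* S) (a : R)
    (A : Matrix (Fin N) (Fin N) R) : f.mapMatrix (a • A) = f a • f.mapMatrix A := by
  ext i j
  simp [Matrix.map_apply]

lemma eig_of_det {N : ℕ} (c : ℂ) (h : (1 + c • Lmat ℂ N).det = 0) :
    c ≠ 0 ∧ IsEig (Lmat ℂ N) (-1 / c) := by
  have hc : c ≠ 0 := by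
    rintro rfl
    simp at h
  obtain ⟨v, hv, hv0⟩ := (Matrix.exists_mulVec_eq_zero_iff).mpr h
  refine ⟨hc, v, hv, ?_⟩
  rw [Matrix.add_mulVec, Matrix.one_mulVec, Matrix.smul_mulVec] at hv0
  have h3 : c • (Lmat ℂ N).mulVec v = -v := by
    rw [add_comm] at hv0
    exact eq_neg_of_add_eq_zero_left hv0
  calc (Lmat ℂ N).mulVec v = c⁻¹ • (c • (Lmat ℂ N).mulVec v) := by
        rw [smul_smul, inv_mul_cancel₀ hc, one_smul]
    _ = c⁻¹ • (-v) := by rw [h3]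
    _ = (-1 / c) • v := by
        rw [neg_div, one_div, neg_smul, smul_neg]

/-- Poles of `S_N` in the open right half-plane force `P(z)C(z)λ = -1` for an eigenvalue `λ`
of `L_N`; conversely, vanishing of `det(I + P(z)C(z)L_N)` at `z ∈ ℂ₊` makes `-1/(P(z)C(z))`
an eigenvalue of `L_N`. -/
theorem pole_iff_eigenvalue (P C : RatFunc ℂ) (N : ℕ) (hN : 0 < N) (z : ℂ) (hz : 0 < z.re) :
    ((((1 + (P * C) • Lmat (RatFunc ℂ) N)⁻¹ ⟨0, hN⟩ ⟨0, hN⟩).denom.eval z = 0) →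
        ∃ μ : ℂ, IsEig (Lmat ℂ N) μ ∧ (P * C).eval (RingHom.id ℂ) z * μ = -1) ∧
    ((Matrix.det (1 + ((P * C).eval (RingHom.id ℂ) z) • Lmat ℂ N) = 0) →
        IsEig (Lmat ℂ N) (-1 / ((P * C).eval (RingHom.id ℂ) z))) := by
  constructor
  · intro h
    set g : RatFunc ℂ := P * C with hg
    by_cases hdet : (1 + g • Lmat (RatFunc ℂ) N).det = 0
    · exfalso
      rw [Matrix.nonsing_inv_apply_not_isUnit _ (by rw [hdet]; exact not_isUnit_zero)] at h
      simp at h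
    · -- the interesting case
      set φ := algebraMap (Polynomial ℂ) (RatFunc ℂ) with hφ
      set p : (Polynomial ℂ) := g.num with hp
      set q : (Polynomial ℂ) := g.denom with hq
      have hq0 : q ≠ 0 := g.denom_ne_zero
      have hφq : φ q ≠ 0 := RatFunc.algebraMap_ne_zero hq0
      set Mp : Matrix (Fin N) (Fin N) (Polynomial ℂ) := q • 1 + p • Lmat (Polynomial ℂ) N with hMp
      set E : (Polynomial ℂ) := Mp.det with hE
      have hMmap : φ.mapMatrix Mp = φ q • 1 + φ p • Lmat (RatFunc ℂ) N := by
        rw [hMp, map_add, mapMatrix_smul, mapMatrix_smul, _root_.map_one,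
          RingHom.mapMatrix_apply, map_Lmat]
      have hA : 1 + g • Lmat (RatFunc ℂ) N = (φ q)⁻¹ • φ.mapMatrix Mp := by
        rw [hMmap, smul_add, smul_smul, inv_mul_cancel₀ hφq, one_smul, smul_smul,
          inv_mul_eq_div, ← RatFunc.num_div_denom g]
      have hdetA : (1 + g • Lmat (RatFunc ℂ) N).det = ((φ q)⁻¹) ^ N * φ E := by
        rw [hA, Matrix.det_smul, ← RingHom.map_det]
        simp [hE]
      have hφE : φ E ≠ 0 := by
        intro hc
        exact hdet (by rw [hdetA, hc, mul_zero])
      have hE0 : E ≠ 0 := fun hc => hφE (by rw [hc, map_zero])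
      -- entry formula
      have hinv : (1 + g • Lmat (RatFunc ℂ) N)⁻¹ ⟨0, hN⟩ ⟨0, hN⟩ =
          φ (q * (Mp.adjugate ⟨0, hN⟩ ⟨0, hN⟩)) / φ E := by
        rw [Matrix.inv_def, Matrix.smul_apply, Ring.inverse_eq_inv, hdetA]
        rw [hA, Matrix.adjugate_smul, Matrix.smul_apply, ← RingHom.map_adjugate]
        simp only [RingHom.mapMatrix_apply, Matrix.map_apply]
        rw [Fintype.card_fin, smul_eq_mul, smul_eq_mul, _root_.map_mul, mul_inv, inv_pow,
          inv_inv]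
        have hNsplit : (φ q) ^ N = φ q * (φ q) ^ (N - 1) := by
          conv_lhs => rw [show N = (N - 1) + 1 by omega]
          rw [pow_succ, mul_comm]
        rw [hNsplit, div_eq_mul_inv]
        have hqpow : (φ q) ^ (N - 1) ≠ 0 := pow_ne_zero _ hφq
        field_simp
        rw [← mul_pow, mul_one_div_cancel hφq, one_pow, one_mul]
      have hdvd : ((1 + g • Lmat (RatFunc ℂ) N)⁻¹ ⟨0, hN⟩ ⟨0, hN⟩).denom ∣ E :=
        (RatFunc.denom_dvd hE0).mpr ⟨_, hinv⟩
      have hEz : E.eval z = 0 := by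
        obtain ⟨c, hc⟩ := hdvd
        rw [hc, Polynomial.eval_mul, h, zero_mul]
      -- transfer to ℂ
      have hdetC : ((q.eval z) • (1 : Matrix (Fin N) (Fin N) ℂ) + (p.eval z) • Lmat ℂ N).det = 0 := by
        have hmap : (Polynomial.evalRingHom z).mapMatrix Mp =
            (q.eval z) • (1 : Matrix (Fin N) (Fin N) ℂ) + (p.eval z) • Lmat ℂ N := by
          rw [hMp, map_add, mapMatrix_smul, mapMatrix_smul, _root_.map_one,
            RingHom.mapMatrix_apply, map_Lmat]
          simp
        rw [← hmap, ← RingHom.map_det]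
        simpa using hEz
      by_cases hqz : q.eval z = 0
      · exfalso
        have hpz : p.eval z ≠ 0 := by
          intro hpz
          obtain ⟨a, b, hab⟩ := g.isCoprime_num_denom
          have h1 := congrArg (Polynomial.eval z) hab
          simp [← hp, ← hq, hpz, hqz] at h1
        rw [hqz, zero_smul, zero_add, Matrix.det_smul, det_Lmat, mul_one,
          Fintype.card_fin] at hdetC
        exact pow_ne_zero N hpz hdetC
      · have hcq : q.eval z • (1 : Matrix (Fin N) (Fin N) ℂ) + p.eval z • Lmat ℂ N =
            q.eval z • (1 + (p.eval z / q.eval z) • Lmat ℂ N) := by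
          rw [smul_add, smul_smul]
          congr 2
          field_simp
        rw [hcq, Matrix.det_smul, Fintype.card_fin, mul_eq_zero] at hdetC
        have hdet2 : (1 + (p.eval z / q.eval z) • Lmat ℂ N).det = 0 := by
          rcases hdetC with h' | h'
          · exact absurd h' (pow_ne_zero _ hqz)
          · exact h'
        obtain ⟨hc0, heig⟩ := eig_of_det _ hdet2
        have hceval : g.eval (RingHom.id ℂ) z = p.eval z / q.eval z := by
          rw [RatFunc.eval]
          rfl
        refine ⟨-1 / (p.eval z / q.eval z), heig, ?_⟩
        rw [hceval, neg_div, mul_neg, mul_one_div, div_self hc0]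
  · intro h
    exact (eig_of_det _ h).2
end

section
/- If 1/(1 + k·P(s)C(s)) is stable (has no poles in the closed right half-plane) for every k ∈ (0,4), then for every N ∈ ℕ the rational function 1/det(I + P(s)C(s)L_N) has no poles in the closed right half-plane. -/
open Matrix

set_option synthInstance.maxHeartbeats 1000000
set_option maxHeartbeats 1000000

/-- A real rational function is stable (lies in `H∞`) if it is proper and its (reduced)
denominator has no roots in the closed right half-plane. -/
def IsStable (F : RatFunc ℝ) : Prop :=
  F.num.degree ≤ F.denom.degree ∧
    ∀ z : ℂ, 0 ≤ z.re → (F.denom.map (algebraMap ℝ ℂ)).eval z ≠ 0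

namespace DetAux

/-- The shift matrix. -/
def Smat (N : ℕ) : Matrix (Fin N) (Fin N) ℂ :=
  Matrix.of fun i j => if (i : ℕ) + 1 = (j : ℕ) then 1 else 0

lemma StS (N : ℕ) : (Smat N)ᵀ * Smat N =
    Matrix.diagonal (fun i : Fin N => if 0 < (i : ℕ) then 1 else 0) := by
  ext i j
  rw [Matrix.mul_apply, Matrix.diagonal_apply]
  simp only [Matrix.transpose_apply, Smat, Matrix.of_apply]
  rcases i with ⟨iv, hi⟩
  rcases j with ⟨jv, hj⟩
  simp only [Fin.mk.injEq]
  rcases iv with _ | n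
  · rw [Finset.sum_eq_zero (fun k _ => by simp)]
    split_ifs <;> simp_all
  · rw [Fintype.sum_eq_single (⟨n, by omega⟩ : Fin N)]
    · simp only [Fin.val_mk]
      split_ifs <;> simp_all
    · intro x hx
      rw [if_neg (fun h => hx (Fin.ext (by simp only [Fin.val_mk]; omega))), zero_mul]

lemma factor_L (N : ℕ) : Lmat ℂ N = (1 - Smat N)ᵀ * (1 - Smat N) := by
  rw [Matrix.transpose_sub, Matrix.transpose_one, Matrix.sub_mul, Matrix.one_mul,
    Matrix.mul_sub, Matrix.mul_one, StS]
  ext i j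
  simp only [Lmat, Matrix.of_apply, Matrix.sub_apply, Matrix.one_apply,
    Matrix.transpose_apply, Smat, Matrix.diagonal_apply, Fin.ext_iff]
  split_ifs <;> (try norm_num) <;> omega

lemma factor_4L (N : ℕ) :
    (4 : ℂ) • (1 : Matrix (Fin N) (Fin N) ℂ) - Lmat ℂ N =
      (1 + Smat N)ᵀ * (1 + Smat N) +
        Matrix.diagonal (fun i : Fin N => if (i : ℕ) = 0 then 2 else 0) := by
  rw [Matrix.transpose_add, Matrix.transpose_one, Matrix.add_mul, Matrix.one_mul,
    Matrix.mul_add, Matrix.mul_one, StS]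
  ext i j
  simp only [Lmat, Matrix.of_apply, Matrix.sub_apply, Matrix.add_apply, Matrix.one_apply,
    Matrix.smul_apply, smul_eq_mul, Matrix.transpose_apply, Smat, Matrix.diagonal_apply,
    Fin.ext_iff]
  split_ifs <;> (try norm_num) <;> omega

lemma det_one_sub_S (N : ℕ) : ((1 : Matrix (Fin N) (Fin N) ℂ) - Smat N).det = 1 := by
  rw [Matrix.det_of_upperTriangular]
  · rw [Finset.prod_eq_one]
    intro i _
    simp [Matrix.sub_apply, Matrix.one_apply, Smat]
  · intro i j hji
    simp only [id_eq, Fin.lt_def] at hji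
    simp only [Matrix.sub_apply, Matrix.one_apply, Smat, Matrix.of_apply, Fin.ext_iff]
    split_ifs <;> (try norm_num) <;> omega

lemma det_one_add_S (N : ℕ) : ((1 : Matrix (Fin N) (Fin N) ℂ) + Smat N).det = 1 := by
  rw [Matrix.det_of_upperTriangular]
  · rw [Finset.prod_eq_one]
    intro i _
    simp [Matrix.add_apply, Matrix.one_apply, Smat]
  · intro i j hji
    simp only [id_eq, Fin.lt_def] at hji
    simp only [Matrix.add_apply, Matrix.one_apply, Smat, Matrix.of_apply, Fin.ext_iff]
    split_ifs <;> (try norm_num) <;> omega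

lemma mulVec_star {N : ℕ} (A : Matrix (Fin N) (Fin N) ℂ)
    (hA : ∀ i j, star (A i j) = A i j) (v : Fin N → ℂ) :
    A *ᵥ (star v) = star (A *ᵥ v) := by
  funext i
  simp only [Matrix.mulVec, dotProduct, Pi.star_apply]
  rw [star_sum]
  exact Finset.sum_congr rfl fun j _ => by rw [star_mul', hA]

lemma dot_star_self {N : ℕ} (w : Fin N → ℂ) :
    star w ⬝ᵥ w = ((∑ i, Complex.normSq (w i) : ℝ) : ℂ) := by
  rw [Complex.ofReal_sum]
  exact Finset.sum_congr rfl fun i _ => by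
    rw [Pi.star_apply, Complex.star_def]
    exact Complex.normSq_eq_conj_mul_self.symm

lemma star_dot {N : ℕ} (A : Matrix (Fin N) (Fin N) ℂ)
    (hA : ∀ i j, star (A i j) = A i j) (v : Fin N → ℂ) :
    star v ⬝ᵥ ((Aᵀ * A) *ᵥ v) = ((∑ i, Complex.normSq ((A *ᵥ v) i) : ℝ) : ℂ) := by
  rw [← Matrix.mulVec_mulVec, Matrix.dotProduct_mulVec, Matrix.vecMul_transpose,
    mulVec_star A hA]
  exact dot_star_self _

lemma sum_normSq_pos {N : ℕ} {w : Fin N → ℂ} (hw : w ≠ 0) :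
    0 < ∑ i, Complex.normSq (w i) := by
  obtain ⟨i, hi⟩ := Function.ne_iff.mp hw
  exact Finset.sum_pos' (fun j _ => Complex.normSq_nonneg _)
    ⟨i, Finset.mem_univ i, Complex.normSq_pos.mpr hi⟩

lemma eig_bound {N : ℕ} {μ : ℂ} (h : IsEig (Lmat ℂ N) μ) :
    ∃ k : ℝ, μ = (k : ℂ) ∧ 0 < k ∧ k < 4 := by
  obtain ⟨v, hv0, hv⟩ := h
  set B : Matrix (Fin N) (Fin N) ℂ := 1 - Smat N with hB
  set Cc : Matrix (Fin N) (Fin N) ℂ := 1 + Smat N with hCc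
  have hBc : ∀ i j, star (B i j) = B i j := by
    intro i j
    simp [hB, Matrix.sub_apply, Matrix.one_apply, Smat, apply_ite (star : ℂ → ℂ)]
  have hCcc : ∀ i j, star (Cc i j) = Cc i j := by
    intro i j
    simp [hCc, Matrix.add_apply, Matrix.one_apply, Smat, apply_ite (star : ℂ → ℂ)]
  set r : ℝ := ∑ i, Complex.normSq (v i) with hr
  have hrpos : 0 < r := sum_normSq_pos hv0
  set a : ℝ := ∑ i, Complex.normSq ((B *ᵥ v) i) with ha
  have e1 : μ * (r : ℂ) = (a : ℝ) := by
    have h1 : star v ⬝ᵥ (Lmat ℂ N *ᵥ v) = μ * (r : ℂ) := by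
      rw [hv, dotProduct_smul, dot_star_self, smul_eq_mul]
    have h2 : star v ⬝ᵥ (Lmat ℂ N *ᵥ v) = ((a : ℝ) : ℂ) := by
      rw [factor_L N]
      exact star_dot B hBc v
    rw [← h1, h2]
  have hBv : B *ᵥ v ≠ 0 := by
    intro h0
    have hdet : B.det = 0 := (Matrix.exists_mulVec_eq_zero_iff).mp ⟨v, hv0, h0⟩
    rw [det_one_sub_S] at hdet
    exact one_ne_zero hdet
  have hapos : 0 < a := sum_normSq_pos hBv
  refine ⟨a / r, ?_, div_pos hapos hrpos, ?_⟩
  · rw [Complex.ofReal_div]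
    rw [eq_div_iff (by exact_mod_cast hrpos.ne')]
    exact e1
  · -- upper bound
    set b : ℝ := ∑ i, Complex.normSq ((Cc *ᵥ v) i) with hb
    set c : ℝ := ∑ i : Fin N, (if (i : ℕ) = 0 then (2:ℝ) else 0) * Complex.normSq (v i) with hc
    have e2 : (4 - μ) * (r : ℂ) = ((b + c : ℝ) : ℂ) := by
      have h1 : star v ⬝ᵥ (((4 : ℂ) • (1 : Matrix (Fin N) (Fin N) ℂ) - Lmat ℂ N) *ᵥ v)
          = (4 - μ) * (r : ℂ) := by
        rw [Matrix.sub_mulVec, Matrix.smul_mulVec, Matrix.one_mulVec, hv,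
          dotProduct_sub, dotProduct_smul, dotProduct_smul,
          dot_star_self, smul_eq_mul, smul_eq_mul]
        ring
      have hdiag : star v ⬝ᵥ (Matrix.diagonal (fun i : Fin N => if (i : ℕ) = 0 then (2:ℂ) else 0) *ᵥ v)
          = ((c : ℝ) : ℂ) := by
        rw [hc, Complex.ofReal_sum]
        refine Finset.sum_congr rfl fun i _ => ?_
        rw [Matrix.mulVec_diagonal, Pi.star_apply]
        split_ifs <;>
          simp [Complex.normSq_eq_conj_mul_self, Complex.star_def] <;> ring
      have h2 : star v ⬝ᵥ (((4 : ℂ) • (1 : Matrix (Fin N) (Fin N) ℂ) - Lmat ℂ N) *ᵥ v)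
          = ((b + c : ℝ) : ℂ) := by
        rw [factor_4L N, Matrix.add_mulVec, dotProduct_add, star_dot Cc hCcc v, hdiag,
          hb]
        push_cast
        ring
      rw [← h1, h2]
    have hCv : Cc *ᵥ v ≠ 0 := by
      intro h0
      have hdet : Cc.det = 0 := (Matrix.exists_mulVec_eq_zero_iff).mp ⟨v, hv0, h0⟩
      rw [det_one_add_S] at hdet
      exact one_ne_zero hdet
    have hbpos : 0 < b := sum_normSq_pos hCv
    have hcnn : 0 ≤ c := Finset.sum_nonneg fun i _ => by
      split_ifs <;> first | positivity | simp [Complex.normSq_nonneg]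
    have e2' : (4 - a / r) * r = b + c := by
      have hμ : μ = ((a / r : ℝ) : ℂ) := by
        rw [Complex.ofReal_div, eq_div_iff (by exact_mod_cast hrpos.ne')]
        exact e1
      have := e2
      rw [hμ] at this
      exact_mod_cast this
    nlinarith

/-- Evaluation of a real polynomial at a complex point, as a ring hom. -/
noncomputable def ev (z : ℂ) : Polynomial ℝ →+* ℂ :=
  Polynomial.eval₂RingHom (algebraMap ℝ ℂ) z

lemma ev_eq (z : ℂ) (g : Polynomial ℝ) : ev z g = (g.map (algebraMap ℝ ℂ)).eval z := by
  simp [ev, Polynomial.coe_eval₂RingHom, Polynomial.eval₂_eq_eval_map]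

lemma ev_C (z : ℂ) (x : ℝ) : ev z (Polynomial.C x) = (x : ℂ) := by
  simp [ev, Polynomial.coe_eval₂RingHom, Complex.coe_algebraMap]

lemma noroot (z : ℂ) (X : RatFunc ℝ) (h1 : ev z X.num = 0) (h2 : ev z X.denom = 0) :
    False := by
  obtain ⟨u, w, huw⟩ := X.isCoprime_num_denom
  have h := congrArg (ev z) huw
  rw [_root_.map_add, _root_.map_mul, _root_.map_mul, _root_.map_one, h1, h2, mul_zero, mul_zero, add_zero] at h
  exact zero_ne_one h

lemma map_Lmat {R S : Type*} [CommRing R] [CommRing S] (f : R →+* S) (N : ℕ) (i j : Fin N) :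
    f (Lmat R N i j) = Lmat S N i j := by
  simp only [Lmat, Matrix.of_apply]
  split_ifs <;> simp [map_ofNat]

lemma det_map_aux {R S : Type*} [CommRing R] [CommRing S] (f : R →+* S) (N : ℕ)
    (p q : R) :
    f ((q • (1 : Matrix (Fin N) (Fin N) R) + p • Lmat R N).det)
      = (f q • (1 : Matrix (Fin N) (Fin N) S) + f p • Lmat S N).det := by
  rw [RingHom.map_det, RingHom.mapMatrix_apply]
  congr 1
  ext i j
  simp only [Matrix.map_apply, Matrix.add_apply, Matrix.smul_apply, smul_eq_mul]
  rw [_root_.map_add, _root_.map_mul, _root_.map_mul, map_Lmat f]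
  congr 2
  simp only [Matrix.one_apply, apply_ite f, _root_.map_one, _root_.map_zero]

end DetAux

open DetAux in
/-- If `1/(1 + k P C)` is stable for every `k ∈ (0,4)`, then `1/det(I + P C L_N)` has no
poles in the closed right half-plane, for every `N`. -/
theorem det_inv_no_CRHP_poles (P C : RatFunc ℝ)
    (hstab : ∀ k : ℝ, k ∈ Set.Ioo (0 : ℝ) 4 → IsStable (1 / (1 + RatFunc.C k * P * C))) :
    ∀ N : ℕ, ∀ z : ℂ, 0 ≤ z.re →
      ((1 / Matrix.det (1 + (P * C) • Lmat (RatFunc ℝ) N)).denom.map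
          (algebraMap ℝ ℂ)).eval z ≠ 0 := by
  intro N z hz hcon
  set G : RatFunc ℝ := P * C with hG
  set F : RatFunc ℝ := Matrix.det (1 + G • Lmat (RatFunc ℝ) N) with hF
  by_cases hF0 : F = 0
  · rw [hF0, div_zero, RatFunc.denom_zero, Polynomial.map_one, Polynomial.eval_one] at hcon
    exact one_ne_zero hcon
  set p : Polynomial ℝ := G.num with hp
  set q : Polynomial ℝ := G.denom with hq
  have hq0 : q ≠ 0 := G.denom_ne_zero
  have hpdiv : algebraMap (Polynomial ℝ) (RatFunc ℝ) p / algebraMap _ _ q = G := by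
    rw [hp, hq]; exact RatFunc.num_div_denom G
  have hpq1 : algebraMap (Polynomial ℝ) (RatFunc ℝ) q * G = algebraMap _ _ p := by
    rw [← hpdiv, mul_div_cancel₀ _ (RatFunc.algebraMap_ne_zero hq0)]
  set D : Polynomial ℝ :=
    (q • (1 : Matrix (Fin N) (Fin N) (Polynomial ℝ)) + p • Lmat (Polynomial ℝ) N).det with hD
  have halg : algebraMap (Polynomial ℝ) (RatFunc ℝ) D = (algebraMap _ _ q) ^ N * F := by
    rw [hD, det_map_aux (algebraMap (Polynomial ℝ) (RatFunc ℝ)) N p q]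
    have e : (algebraMap (Polynomial ℝ) (RatFunc ℝ) q) •
        ((1 : Matrix (Fin N) (Fin N) (RatFunc ℝ)) + G • Lmat (RatFunc ℝ) N)
        = algebraMap (Polynomial ℝ) (RatFunc ℝ) q • (1 : Matrix (Fin N) (Fin N) (RatFunc ℝ))
          + algebraMap (Polynomial ℝ) (RatFunc ℝ) p • Lmat (RatFunc ℝ) N := by
      rw [smul_add, smul_smul, hpq1]
    rw [← e, Matrix.det_smul, Fintype.card_fin, hF]
  have hFrel : F.num * q ^ N = D * F.denom := by
    refine (RatFunc.num_mul_eq_mul_denom_iff (pow_ne_zero N hq0)).mpr ?_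
    rw [_root_.map_pow, eq_div_iff (pow_ne_zero _ (RatFunc.algebraMap_ne_zero hq0)), halg]
    ring
  have hXrel : (1/F).num * F.num = F.denom * (1/F).denom := by
    refine (RatFunc.num_mul_eq_mul_denom_iff (RatFunc.num_ne_zero hF0)).mpr ?_
    conv_lhs => rw [one_div, ← RatFunc.num_div_denom F]
    rw [inv_div]
  have hEden : ev z ((1/F).denom) = 0 := by rw [ev_eq]; exact hcon
  have hFnum0 : ev z F.num = 0 := by
    have h := congrArg (ev z) hXrel
    rw [_root_.map_mul, _root_.map_mul, hEden, mul_zero] at h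
    rcases mul_eq_zero.mp h with h' | h'
    · exact absurd hEden (fun h2 => noroot z (1/F) h' h2)
    · exact h'
  have hFden : ev z F.denom ≠ 0 := fun h => noroot z F hFnum0 h
  have h5 : ev z D = 0 := by
    have h := congrArg (ev z) hFrel
    rw [_root_.map_mul, _root_.map_mul, hFnum0, zero_mul] at h
    rcases mul_eq_zero.mp h.symm with h' | h'
    · exact h'
    · exact absurd h' hFden
  have hnn : ¬(ev z p = 0 ∧ ev z q = 0) := fun ⟨h1, h2⟩ => noroot z G h1 h2
  have hmat : ((ev z q) • (1 : Matrix (Fin N) (Fin N) ℂ) + (ev z p) • Lmat ℂ N).det = 0 := by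
    rw [← det_map_aux (ev z) N p q]
    exact h5
  rcases Nat.eq_zero_or_pos N with hN | hN
  · subst hN
    rw [Matrix.det_isEmpty] at hmat
    exact one_ne_zero hmat
  have hPz : ev z p ≠ 0 := by
    intro h0
    rw [h0, zero_smul, add_zero, Matrix.det_smul, Fintype.card_fin, Matrix.det_one,
      mul_one] at hmat
    exact hnn ⟨h0, pow_eq_zero_iff hN.ne' |>.mp hmat⟩
  set μ : ℂ := -(ev z q) / (ev z p) with hμdef
  have hfac : (ev z q) • (1 : Matrix (Fin N) (Fin N) ℂ) + (ev z p) • Lmat ℂ N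
      = (ev z p) • (Lmat ℂ N - μ • 1) := by
    have hPμ : (ev z p) * μ = -(ev z q) := by
      rw [hμdef, mul_div_cancel₀ _ hPz]
    rw [smul_sub, smul_smul, hPμ, neg_smul, sub_neg_eq_add, add_comm]
  rw [hfac, Matrix.det_smul, Fintype.card_fin] at hmat
  have hdet0 : (Lmat ℂ N - μ • 1).det = 0 := by
    rcases mul_eq_zero.mp hmat with h' | h'
    · exact absurd ((pow_eq_zero_iff hN.ne').mp h') hPz
    · exact h'
  obtain ⟨v, hv0, hveq⟩ := (Matrix.exists_mulVec_eq_zero_iff).mpr hdet0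
  have heig : IsEig (Lmat ℂ N) μ := by
    refine ⟨v, hv0, ?_⟩
    rw [Matrix.sub_mulVec, Matrix.smul_mulVec, Matrix.one_mulVec, sub_eq_zero] at hveq
    exact hveq
  obtain ⟨k, hμk, hk0, hk4⟩ := eig_bound heig
  have hgz : ev z q + (k : ℂ) * ev z p = 0 := by
    have h' : -(ev z q) / (ev z p) = (k : ℂ) := by rw [← hμdef]; exact hμk
    rw [div_eq_iff hPz] at h'
    linear_combination -h'
  set g : Polynomial ℝ := q + Polynomial.C k * p with hgdef
  have hφg : ev z g = 0 := by
    rw [hgdef, _root_.map_add, _root_.map_mul, ev_C]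
    exact hgz
  by_cases hg0 : g = 0
  · -- degenerate case : `q + C k * p = 0`, so `p, q` are constants
    have hDne : D ≠ 0 := by
      intro h0
      rw [h0, _root_.map_zero] at halg
      exact (mul_ne_zero (pow_ne_zero _ (RatFunc.algebraMap_ne_zero hq0)) hF0) halg.symm
    have hqCp : q = Polynomial.C (-k) * p := by
      have h' : q + Polynomial.C k * p = 0 := by rw [← hgdef]; exact hg0
      rw [_root_.map_neg, neg_mul]
      linear_combination h'
    have cop : IsCoprime p q := by
      rw [hp, hq]; exact RatFunc.isCoprime_num_denom G
    have hpu : IsUnit p :=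
      cop.isUnit_of_dvd' dvd_rfl ⟨Polynomial.C (-k), by rw [hqCp]; ring⟩
    obtain ⟨pc, hpcu, hpc⟩ := Polynomial.isUnit_iff.mp hpu
    have hqC : q = Polynomial.C (-k * pc) := by
      rw [hqCp, ← hpc, ← Polynomial.C_mul]
    have hkpc : -k * pc = 1 := by
      have hm : q.Monic := RatFunc.monic_denom G
      rw [hqC] at hm
      have := Polynomial.leadingCoeff_C (-k * pc)
      rw [hm.leadingCoeff] at this
      exact this.symm
    have hq1 : q = 1 := by rw [hqC, hkpc, Polynomial.C_1]
    have hDC : D = Polynomial.C (((1 : Matrix (Fin N) (Fin N) ℝ) + pc • Lmat ℝ N).det) := by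
      have h := det_map_aux (Polynomial.C : ℝ →+* Polynomial ℝ) N pc 1
      rw [_root_.map_one, one_smul, one_smul] at h
      rw [hD, hq1, ← hpc, one_smul]
      exact h.symm
    have hM0 : ((1 : Matrix (Fin N) (Fin N) ℝ) + pc • Lmat ℝ N).det = 0 := by
      have h := h5
      rw [hDC, ev_C] at h
      exact_mod_cast h
    exact hDne (by rw [hDC, hM0, Polynomial.C_0])
  · -- main case : apply the stability hypothesis at `k`
    have hstabk := hstab k ⟨hk0, hk4⟩
    set H : RatFunc ℝ := 1 + RatFunc.C k * P * C with hH
    have hHeq : H = algebraMap _ _ g / algebraMap _ _ q := by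
      rw [hH, hgdef, _root_.map_add, _root_.map_mul, RatFunc.algebraMap_C, add_div,
        div_self (RatFunc.algebraMap_ne_zero hq0), mul_div_assoc, hpdiv, hG, mul_assoc]
    have hstab2 : ev z ((1/H).denom) ≠ 0 := by
      rw [ev_eq]
      exact hstabk.2 z hz
    have hrel : (1/H).num * g = q * (1/H).denom := by
      refine (RatFunc.num_mul_eq_mul_denom_iff hg0).mpr ?_
      rw [one_div, hHeq, inv_div]
    have h := congrArg (ev z) hrel
    rw [_root_.map_mul, _root_.map_mul, hφg, mul_zero] at h
    have hqz : ev z q = 0 := by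
      rcases mul_eq_zero.mp h.symm with h' | h'
      · exact h'
      · exact absurd h' hstab2
    have : (k : ℂ) * ev z p = 0 := by
      rw [hqz, zero_add] at hgz
      exact hgz
    rcases mul_eq_zero.mp this with h' | h'
    · exact hk0.ne' (by exact_mod_cast h')
    · exact hPz h'
end

section
/- Let ζ_N = 1 − iΔ_N/√a + ((b√a − 1)/(2a))Δ_N² + O(Δ_N³) where Δ_N = π√a/(2N+1), a ≠ 0, b ∈ ℂ. Then as N → ∞: (i) 1 − ζ_N = iπ/(2N+1) + O(1/N²); (ii) 1 − ζ_N^{2N} → 2; (iii) (2N+1)(1 + ζ_N^{2N+1}) → −π²·(b√a)/2 (assuming b ≠ 0); and consequently (1 − ζ_N)(1 − ζ_N^{2N})/(1 + ζ_N^{2N+1}) → −4i/(π·b·√a). -/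
open Matrix

open Filter Asymptotics Topology

/-- Asymptotics of `ζ_N = 1 − iΔ_N/√a + ((b√a−1)/(2a))Δ_N² + O(Δ_N³)` with
`Δ_N = π√a/(2N+1)`. -/
theorem zeta_sequence_limits (a b r : ℂ) (ha : a ≠ 0) (hb : b ≠ 0) (hr : r ^ 2 = a)
    (ζ : ℕ → ℂ)
    (hζ : (fun N : ℕ => ζ N -
            (1 - Complex.I * ((Real.pi : ℂ) * r / (2 * N + 1)) / r +
              ((b * r - 1) / (2 * a)) * ((Real.pi : ℂ) * r / (2 * N + 1)) ^ 2))
          =O[atTop] fun N : ℕ => ((N : ℝ) ^ 3)⁻¹) :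
    ((fun N : ℕ => (1 - ζ N) - Complex.I * (Real.pi : ℂ) / (2 * N + 1))
        =O[atTop] fun N : ℕ => ((N : ℝ) ^ 2)⁻¹) ∧
    Tendsto (fun N : ℕ => 1 - ζ N ^ (2 * N)) atTop (𝓝 2) ∧
    Tendsto (fun N : ℕ => (2 * (N : ℂ) + 1) * (1 + ζ N ^ (2 * N + 1))) atTop
      (𝓝 (-(Real.pi : ℂ) ^ 2 * (b * r) / 2)) ∧
    Tendsto (fun N : ℕ => (1 - ζ N) * (1 - ζ N ^ (2 * N)) / (1 + ζ N ^ (2 * N + 1))) atTop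
      (𝓝 (-4 * Complex.I / ((Real.pi : ℂ) * b * r))) := by
  subst hr
  have hr0 : r ≠ 0 := by
    intro h; exact ha (by simp [h])
  set P : ℂ := (Real.pi : ℂ) with hP
  have hπ : P ≠ 0 := by
    simp only [hP, Ne, Complex.ofReal_eq_zero]
    exact Real.pi_ne_zero
  have hd0 : ∀ N : ℕ, (2 * (N : ℂ) + 1) ≠ 0 := by
    intro N
    have h1 : ((2 * N + 1 : ℕ) : ℂ) ≠ 0 := Nat.cast_ne_zero.2 (by omega)
    push_cast at h1
    exact h1
  have hdnorm : ∀ N : ℕ, ‖(2 * (N : ℂ) + 1)‖ = 2 * (N : ℝ) + 1 := by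
    intro N
    have h1 : (2 * (N : ℂ) + 1) = ((2 * (N : ℝ) + 1 : ℝ) : ℂ) := by push_cast; ring
    rw [h1, Complex.norm_real, Real.norm_eq_abs, abs_of_nonneg (by positivity)]
  -- inverse powers of (2N+1) are O of inverse powers of N
  have hdinv : ∀ m : ℕ, (fun N : ℕ => (((2 * (N : ℂ) + 1)) ^ m)⁻¹)
      =O[atTop] fun N : ℕ => ((N : ℝ) ^ m)⁻¹ := by
    intro m
    refine IsBigO.of_bound 1 ?_
    filter_upwards [eventually_ge_atTop 1] with N hN
    have hN1 : (1 : ℝ) ≤ (N : ℝ) := by exact_mod_cast hN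
    rw [one_mul, norm_inv, norm_pow, hdnorm N, Real.norm_eq_abs,
      abs_of_nonneg (by positivity)]
    gcongr
    linarith
  have hdgrow : ∀ m : ℕ, (fun N : ℕ => ((2 * (N : ℂ) + 1)) ^ m)
      =O[atTop] fun N : ℕ => (N : ℝ) ^ m := by
    intro m
    refine IsBigO.of_bound (3 ^ m) ?_
    filter_upwards [eventually_ge_atTop 1] with N hN
    have hN1 : (1 : ℝ) ≤ (N : ℝ) := by exact_mod_cast hN
    rw [norm_pow, hdnorm N, Real.norm_eq_abs, abs_of_nonneg (by positivity), ← mul_pow]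
    gcongr
    linarith
  have hmono : ∀ i j : ℕ, i ≤ j → (fun N : ℕ => ((N : ℝ) ^ j)⁻¹)
      =O[atTop] fun N : ℕ => ((N : ℝ) ^ i)⁻¹ := by
    intro i j hij
    refine IsBigO.of_bound 1 ?_
    filter_upwards [eventually_ge_atTop 1] with N hN
    have hN1 : (1 : ℝ) ≤ (N : ℝ) := by exact_mod_cast hN
    rw [one_mul, Real.norm_eq_abs, Real.norm_eq_abs, abs_of_nonneg (by positivity),
      abs_of_nonneg (by positivity)]
    exact inv_anti₀ (by positivity) (pow_le_pow_right₀ hN1 hij)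
  have hNinv0 : Tendsto (fun N : ℕ => ((N : ℝ))⁻¹) atTop (𝓝 0) :=
    tendsto_inv_atTop_zero.comp tendsto_natCast_atTop_atTop
  -- the constant k and the remainder e
  set k : ℂ := P ^ 2 * (b * r - 1) / 2 with hk
  set e : ℕ → ℂ := fun N =>
    ζ N - 1 + Complex.I * P / (2 * (N : ℂ) + 1) - k / (2 * (N : ℂ) + 1) ^ 2 with he_def
  have he : e =O[atTop] fun N : ℕ => ((N : ℝ) ^ 3)⁻¹ := by
    refine hζ.congr (fun N => ?_) (fun _ => rfl)
    have hdN := hd0 N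
    simp only [he_def, hk]
    field_simp
    ring
  set u : ℕ → ℂ := fun N => ζ N - 1 with hu_def
  have hue : ∀ N, u N = -(Complex.I * P) / (2 * (N : ℂ) + 1) + k / (2 * (N : ℂ) + 1) ^ 2 + e N := by
    intro N; simp only [hu_def, he_def]; ring
  have hinv1 : (fun N : ℕ => ((2 * (N : ℂ) + 1))⁻¹) =O[atTop] fun N : ℕ => ((N : ℝ))⁻¹ :=
    (hdinv 1).congr (fun N => by rw [pow_one]) (fun N => by rw [pow_one])
  have hu1 : u =O[atTop] fun N : ℕ => ((N : ℝ))⁻¹ := by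
    have h1 : (fun N : ℕ => -(Complex.I * P) / (2 * (N : ℂ) + 1))
        =O[atTop] fun N : ℕ => ((N : ℝ))⁻¹ :=
      (hinv1.const_mul_left (-(Complex.I * P))).congr
        (fun N => (div_eq_mul_inv _ _).symm) (fun _ => rfl)
    have h2 : (fun N : ℕ => k / (2 * (N : ℂ) + 1) ^ 2) =O[atTop] fun N : ℕ => ((N : ℝ))⁻¹ := by
      refine (((hdinv 2).const_mul_left k).trans ?_).congr
        (fun N => (div_eq_mul_inv _ _).symm) (fun _ => rfl)
      exact (hmono 1 2 (by norm_num)).congr (fun _ => rfl) (fun N => by rw [pow_one])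
    have h3 : e =O[atTop] fun N : ℕ => ((N : ℝ))⁻¹ :=
      he.trans ((hmono 1 3 (by norm_num)).congr (fun _ => rfl) (fun N => by rw [pow_one]))
    exact ((h1.add h2).add h3).congr (fun N => (hue N).symm) (fun _ => rfl)
  have hu0 : Tendsto u atTop (𝓝 0) := hu1.trans_tendsto hNinv0
  have hzlim : Tendsto ζ atTop (𝓝 1) := by
    have h := hu0.add_const 1
    rw [zero_add] at h
    refine h.congr fun N => ?_
    simp [hu_def]
  have hzne : ∀ᶠ N in atTop, ζ N ≠ 0 := hzlim.eventually_ne one_ne_zero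
  -- Taylor expansion of log
  set L : ℕ → ℂ := fun N => Complex.log (ζ N) with hL_def
  set f : ℕ → ℂ := fun N => L N - u N + u N ^ 2 / 2 with hf_def
  have husmall : ∀ᶠ N in atTop, ‖u N‖ < 1 / 2 := by
    have h := hu0.norm
    rw [norm_zero] at h
    exact h.eventually_lt_const (by norm_num)
  have hf : f =O[atTop] fun N : ℕ => ((N : ℝ) ^ 3)⁻¹ := by
    have hbdd : f =O[atTop] fun N => u N ^ 3 := by
      refine IsBigO.of_bound (2 / 3) ?_
      filter_upwards [husmall] with N hN
      have hN1 : ‖u N‖ < 1 := lt_trans hN (by norm_num)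
      have key := Complex.norm_log_sub_logTaylor_le 2 hN1
      have hlt : Complex.logTaylor 3 (u N) = u N - u N ^ 2 / 2 := by
        simp [Complex.logTaylor, Finset.sum_range_succ]
        ring
      have h1u : (1 : ℂ) + u N = ζ N := by simp [hu_def]
      rw [hlt, h1u] at key
      have hfn : f N = Complex.log (ζ N) - (u N - u N ^ 2 / 2) := by
        simp only [hf_def, hL_def]; ring
      have hinvle : (1 - ‖u N‖)⁻¹ ≤ 2 := by
        rw [show (2 : ℝ) = ((1:ℝ)/2)⁻¹ by norm_num]
        exact inv_anti₀ (by norm_num) (by linarith)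
      rw [norm_pow, hfn]
      calc ‖Complex.log (ζ N) - (u N - u N ^ 2 / 2)‖
          ≤ ‖u N‖ ^ 3 * (1 - ‖u N‖)⁻¹ / 3 := by exact_mod_cast key
        _ ≤ 2 / 3 * ‖u N‖ ^ 3 := by
            have h0 : (0:ℝ) ≤ ‖u N‖ ^ 3 := by positivity
            nlinarith
    exact hbdd.trans ((hu1.pow 3).congr (fun _ => rfl) (fun N => inv_pow _ _))
  -- second-order term
  set s : ℕ → ℂ := fun N => k / (2 * (N : ℂ) + 1) ^ 2 + e N with hs_def
  have hs : s =O[atTop] fun N : ℕ => ((N : ℝ) ^ 2)⁻¹ :=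
    (((hdinv 2).const_mul_left k).congr (fun N => (div_eq_mul_inv _ _).symm)
      (fun _ => rfl)).add (he.trans (hmono 2 3 (by norm_num)))
  have hp : (fun N : ℕ => u N ^ 2 + P ^ 2 / (2 * (N : ℂ) + 1) ^ 2)
      =O[atTop] fun N : ℕ => ((N : ℝ) ^ 3)⁻¹ := by
    have hid : ∀ N : ℕ, u N ^ 2 + P ^ 2 / (2 * (N : ℂ) + 1) ^ 2
        = (-(2 * Complex.I * P) / (2 * (N : ℂ) + 1)) * s N + s N ^ 2 := by
      intro N
      have huN : u N = -(Complex.I * P) / (2 * (N : ℂ) + 1) + s N := by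
        rw [hue N]; simp only [hs_def]; ring
      rw [huN]
      have hdN := hd0 N
      field_simp [hdN]
      linear_combination P ^ 2 * Complex.I_sq
    have h1 : (fun N : ℕ => (-(2 * Complex.I * P) / (2 * (N : ℂ) + 1)) * s N)
        =O[atTop] fun N : ℕ => ((N : ℝ) ^ 3)⁻¹ := by
      have hfac : (fun N : ℕ => -(2 * Complex.I * P) / (2 * (N : ℂ) + 1))
          =O[atTop] fun N : ℕ => ((N : ℝ))⁻¹ :=
        (hinv1.const_mul_left _).congr (fun N => (div_eq_mul_inv _ _).symm) (fun _ => rfl)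
      refine (hfac.mul hs).congr (fun _ => rfl) (fun N => ?_)
      rw [← mul_inv]
      ring_nf
    have h2 : (fun N : ℕ => s N ^ 2) =O[atTop] fun N : ℕ => ((N : ℝ) ^ 3)⁻¹ := by
      refine ((hs.pow 2).congr (fun _ => rfl) (fun N => ?_)).trans (hmono 3 4 (by norm_num))
      rw [← inv_pow]
      ring_nf
    exact (h1.add h2).congr (fun N => (hid N).symm) (fun _ => rfl)
  -- refined expansion of log ζ
  set q : ℕ → ℂ := fun N =>
    L N - (-(Complex.I * P) / (2 * (N : ℂ) + 1) + (P ^ 2 * b * r / 2) / (2 * (N : ℂ) + 1) ^ 2)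
    with hq_def
  have hq : q =O[atTop] fun N : ℕ => ((N : ℝ) ^ 3)⁻¹ := by
    have hid : ∀ N : ℕ, q N
        = e N + f N - (u N ^ 2 + P ^ 2 / (2 * (N : ℂ) + 1) ^ 2) / 2 := by
      intro N
      simp only [hq_def, hf_def, he_def, hk, hu_def]
      ring
    have hp2 : (fun N : ℕ => (u N ^ 2 + P ^ 2 / (2 * (N : ℂ) + 1) ^ 2) / 2)
        =O[atTop] fun N : ℕ => ((N : ℝ) ^ 3)⁻¹ :=
      (hp.const_mul_left (1/2)).congr (fun N => by ring) (fun _ => rfl)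
    exact ((he.add hf).sub hp2).congr (fun N => (hid N).symm) (fun _ => rfl)
  -- key limit
  have hkey : Tendsto (fun N : ℕ => (2 * (N : ℂ) + 1) ^ 2 * L N + Complex.I * P * (2 * (N : ℂ) + 1))
      atTop (𝓝 (P ^ 2 * b * r / 2)) := by
    have hbig : (fun N : ℕ => (2 * (N : ℂ) + 1) ^ 2 * q N) =O[atTop] fun N : ℕ => ((N : ℝ))⁻¹ := by
      refine ((hdgrow 2).mul hq).congr (fun _ => rfl) (fun N => ?_)
      by_cases hN : (N : ℝ) = 0
      · simp [hN]
      · field_simp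
    have h0 : Tendsto (fun N : ℕ => (2 * (N : ℂ) + 1) ^ 2 * q N) atTop (𝓝 0) :=
      hbig.trans_tendsto hNinv0
    have h := h0.add_const (P ^ 2 * b * r / 2)
    rw [zero_add] at h
    refine h.congr fun N => ?_
    have hdN := hd0 N
    simp only [hq_def]
    field_simp [hdN]
    ring
  -- the sequence w
  set w : ℕ → ℂ := fun N => (2 * (N : ℂ) + 1) * L N + Complex.I * P with hw_def
  have hw0 : Tendsto w atTop (𝓝 0) := by
    have h1 : Tendsto (fun N : ℕ => ((2 * (N : ℂ) + 1))⁻¹) atTop (𝓝 0) :=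
      hinv1.trans_tendsto hNinv0
    have h2 := h1.mul hkey
    rw [zero_mul] at h2
    refine h2.congr fun N => ?_
    have hdN := hd0 N
    simp only [hw_def]
    field_simp
  have hww : Tendsto (fun N : ℕ => (2 * (N : ℂ) + 1) * w N) atTop (𝓝 (P ^ 2 * b * r / 2)) :=
    hkey.congr fun N => by simp only [hw_def]; ring
  have hc0 : P ^ 2 * b * r / 2 ≠ 0 := by
    apply div_ne_zero _ two_ne_zero
    exact mul_ne_zero (mul_ne_zero (pow_ne_zero 2 hπ) hb) hr0
  have hwne : ∀ᶠ N in atTop, w N ≠ 0 := by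
    filter_upwards [hww.eventually_ne hc0] with N h hw'
    exact h (by rw [hw'] at *; simpa using (mul_zero _).symm ▸ (by rw [hw']; ring : (2 * (N : ℂ) + 1) * (0:ℂ) = 0))
  -- exponential identity
  have hexp : ∀ᶠ N in atTop, ζ N ^ (2 * N + 1) = -Complex.exp (w N) := by
    filter_upwards [hzne] with N hN
    have hlog : ζ N = Complex.exp (L N) := (Complex.exp_log hN).symm
    calc ζ N ^ (2 * N + 1) = Complex.exp (((2 * N + 1 : ℕ) : ℂ) * L N) := by
          rw [hlog, ← Complex.exp_nat_mul]
      _ = Complex.exp (w N - Complex.I * P) := by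
          congr 1
          simp only [hw_def]
          push_cast
          ring
      _ = -Complex.exp (w N) := by
          rw [Complex.exp_sub, mul_comm Complex.I P, hP, Complex.exp_pi_mul_I]
          field_simp
  have htzpow : Tendsto (fun N : ℕ => ζ N ^ (2 * N + 1)) atTop (𝓝 (-1)) := by
    have h1 : Tendsto (fun N : ℕ => -Complex.exp (w N)) atTop (𝓝 (-Complex.exp 0)) :=
      ((Complex.continuous_exp.tendsto 0).comp hw0).neg
    rw [Complex.exp_zero] at h1
    exact h1.congr' (hexp.mono fun N h => h.symm)
  -- part (ii)
  have h2pow : Tendsto (fun N : ℕ => ζ N ^ (2 * N)) atTop (𝓝 (-1)) := by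
    have h1 := htzpow.div hzlim one_ne_zero
    norm_num at h1
    refine h1.congr' ?_
    filter_upwards [hzne] with N hN
    simp only [Pi.div_apply]
    rw [pow_succ, mul_div_assoc, div_self hN, mul_one]
  have hii : Tendsto (fun N : ℕ => 1 - ζ N ^ (2 * N)) atTop (𝓝 2) := by
    have h1 := h2pow.const_sub (1:ℂ)
    norm_num at h1
    exact h1
  -- part (iii)
  have htail : Tendsto (fun N : ℕ => (Complex.exp (w N) - 1) / w N) atTop (𝓝 1) := by
    have hslope : Tendsto (fun z : ℂ => (Complex.exp z - 1) / z) (𝓝[≠] 0) (𝓝 1) := by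
      have h1 := hasDerivAt_iff_tendsto_slope.1 (Complex.hasDerivAt_exp 0)
      rw [Complex.exp_zero] at h1
      refine h1.congr fun z => ?_
      simp [slope_def_field, div_eq_inv_mul]
    exact hslope.comp (tendsto_nhdsWithin_iff.2 ⟨hw0, hwne.mono fun N hN => hN⟩)
  have hiii : Tendsto (fun N : ℕ => (2 * (N : ℂ) + 1) * (1 + ζ N ^ (2 * N + 1))) atTop
      (𝓝 (-P ^ 2 * (b * r) / 2)) := by
    have hmain := hww.neg.mul htail
    rw [mul_one] at hmain
    have hlim : -(P ^ 2 * b * r / 2) = -P ^ 2 * (b * r) / 2 := by ring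
    rw [hlim] at hmain
    refine hmain.congr' ?_
    filter_upwards [hexp, hwne] with N h1 h2
    rw [h1]
    field_simp
    ring
  -- part (i)
  have hi : (fun N : ℕ => (1 - ζ N) - Complex.I * P / (2 * (N : ℂ) + 1))
      =O[atTop] fun N : ℕ => ((N : ℝ) ^ 2)⁻¹ := by
    refine hs.neg_left.congr (fun N => ?_) (fun _ => rfl)
    simp only [hs_def, he_def]
    ring
  -- part (iv)
  have hnum1 : Tendsto (fun N : ℕ => (2 * (N : ℂ) + 1) * (1 - ζ N)) atTop (𝓝 (Complex.I * P)) := by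
    have hb1 : (fun N : ℕ => (2 * (N : ℂ) + 1) * (1 - ζ N) - Complex.I * P)
        =O[atTop] fun N : ℕ => ((N : ℝ))⁻¹ := by
      refine ((hdgrow 1).mul hi).congr (fun N => ?_) (fun N => ?_)
      · have hdN := hd0 N
        rw [pow_one]
        field_simp
      · rw [pow_one]
        by_cases hN : (N : ℝ) = 0
        · simp [hN]
        · field_simp
    have h0 := hb1.trans_tendsto hNinv0
    have h1 := h0.add_const (Complex.I * P)
    rw [zero_add] at h1
    exact h1.congr fun N => by ring
  have hdenne : ∀ᶠ N in atTop, (1 + ζ N ^ (2 * N + 1)) ≠ 0 := by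
    filter_upwards [hiii.eventually_ne (by
      apply div_ne_zero _ two_ne_zero
      exact mul_ne_zero (neg_ne_zero.2 (pow_ne_zero 2 hπ)) (mul_ne_zero hb hr0))] with N h hcon
    exact h (by rw [hcon, mul_zero])
  have hiv : Tendsto (fun N : ℕ => (1 - ζ N) * (1 - ζ N ^ (2 * N)) / (1 + ζ N ^ (2 * N + 1)))
      atTop (𝓝 (-4 * Complex.I / (P * b * r))) := by
    have hnum := hnum1.mul hii
    have hmain := hnum.div hiii (by
      apply div_ne_zero _ two_ne_zero
      exact mul_ne_zero (neg_ne_zero.2 (pow_ne_zero 2 hπ)) (mul_ne_zero hb hr0))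
    have hlim : Complex.I * P * 2 / (-P ^ 2 * (b * r) / 2) = -4 * Complex.I / (P * b * r) := by
      field_simp
      ring
    rw [hlim] at hmain
    refine hmain.congr' ?_
    filter_upwards [hdenne] with N hN
    have hdN := hd0 N
    show (2 * (N : ℂ) + 1) * (1 - ζ N) * (1 - ζ N ^ (2 * N)) / ((2 * (N : ℂ) + 1) * (1 + ζ N ^ (2 * N + 1)))
        = (1 - ζ N) * (1 - ζ N ^ (2 * N)) / (1 + ζ N ^ (2 * N + 1))
    rw [mul_assoc]
    exact mul_div_mul_left _ _ hdN
  exact ⟨hi, hii, hiii, hiv⟩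
end

section
/- Let G(s) = P(s)C(s) be a rational function with a pole at p in the open right half-plane. Then there exists N ∈ ℕ such that S_N(s) = [(I + G(s)L_N)^{-1}]_{1,1} has a pole in the closed right half-plane; equivalently sup_N ‖S_N‖_∞ = ∞. -/
open Matrix

open Polynomial Filter Real Set Topology

lemma tridiag_mulVec {N : ℕ} (d : Fin N → ℂ) (v : Fin N → ℂ) (i : Fin N) :
    (Matrix.of fun i j : Fin N =>
        if i = j then d i
        else if (i : ℕ) + 1 = (j : ℕ) ∨ (j : ℕ) + 1 = (i : ℕ) then (-1 : ℂ) else 0).mulVec v i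
      = d i * v i - (if h : (i : ℕ) + 1 < N then v ⟨(i : ℕ) + 1, h⟩ else 0)
        - (if h : 0 < (i : ℕ) then v ⟨(i : ℕ) - 1, lt_of_le_of_lt (Nat.pred_le _) i.2⟩ else 0) := by
  have key : ∀ j : Fin N,
      (Matrix.of fun i j : Fin N =>
        if i = j then d i
        else if (i : ℕ) + 1 = (j : ℕ) ∨ (j : ℕ) + 1 = (i : ℕ) then (-1 : ℂ) else 0) i j * v j
      = (if i = j then d i * v j else 0) + (if (i : ℕ) + 1 = (j : ℕ) then -v j else 0)
        + (if (j : ℕ) + 1 = (i : ℕ) then -v j else 0) := by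
    intro j
    simp only [Matrix.of_apply]
    rcases eq_or_ne i j with rfl | hij
    · simp
    · have hij' : (i : ℕ) ≠ (j : ℕ) := fun h => hij (Fin.ext h)
      rw [if_neg hij, if_neg hij]
      by_cases h1 : (i : ℕ) + 1 = (j : ℕ)
      · have h2 : ¬ ((j : ℕ) + 1 = (i : ℕ)) := by omega
        rw [if_pos (Or.inl h1), if_pos h1, if_neg h2]; ring
      · by_cases h2 : (j : ℕ) + 1 = (i : ℕ)
        · rw [if_pos (Or.inr h2), if_neg h1, if_pos h2]; ring
        · rw [if_neg (by tauto), if_neg h1, if_neg h2]; ring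
  have h1 : ∑ j : Fin N, (if i = j then d i * v j else 0) = d i * v i := by
    rw [Finset.sum_ite_eq]; simp
  have h2 : ∑ j : Fin N, (if (i : ℕ) + 1 = (j : ℕ) then -v j else 0)
      = -(if h : (i : ℕ) + 1 < N then v ⟨(i : ℕ) + 1, h⟩ else 0) := by
    by_cases h : (i : ℕ) + 1 < N
    · have he : ∀ j : Fin N, ((i : ℕ) + 1 = (j : ℕ)) = (j = ⟨(i : ℕ) + 1, h⟩) := by
        intro j
        simp only [eq_iff_iff, Fin.ext_iff]
        omega
      simp only [he]
      rw [Finset.sum_ite_eq']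
      simp [h]
    · rw [dif_neg h, Finset.sum_eq_zero, neg_zero]
      intro j _
      rw [if_neg (by omega)]
  have h3 : ∑ j : Fin N, (if (j : ℕ) + 1 = (i : ℕ) then -v j else 0)
      = -(if h : 0 < (i : ℕ) then v ⟨(i : ℕ) - 1, lt_of_le_of_lt (Nat.pred_le _) i.2⟩ else 0) := by
    by_cases h : 0 < (i : ℕ)
    · have he : ∀ j : Fin N, ((j : ℕ) + 1 = (i : ℕ)) = (j = ⟨(i : ℕ) - 1, lt_of_le_of_lt (Nat.pred_le _) i.2⟩) := by
        intro j
        simp only [eq_iff_iff, Fin.ext_iff]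
        omega
      simp only [he]
      rw [Finset.sum_ite_eq']
      simp [h]
    · rw [dif_neg h, Finset.sum_eq_zero, neg_zero]
      intro j _
      rw [if_neg (by omega)]
  rw [Matrix.mulVec, dotProduct]
  simp only [key]
  rw [Finset.sum_add_distrib, Finset.sum_add_distrib, h1, h2, h3]
  ring

noncomputable def th (N : ℕ) : ℝ := Real.pi / (2*N+1)
noncomputable def mu (N : ℕ) : ℝ := 2 - 2*Real.cos (th N)

lemma th_pos (N : ℕ) : 0 < th N := div_pos Real.pi_pos (by positivity)

lemma th_le (N : ℕ) (hN : 0 < N) : th N ≤ π/3 := by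
  unfold th
  apply div_le_div_of_nonneg_left Real.pi_pos.le (by norm_num)
  have : (1:ℝ) ≤ N := by exact_mod_cast hN
  linarith

lemma mu_pos (N : ℕ) (hN : 0 < N) : 0 < mu N := by
  have h1 : Real.cos (th N) < 1 := by
    have := th_pos N
    have h2 := th_le N hN
    have hpi := Real.pi_pos
    rcases lt_or_eq_of_le (Real.cos_le_one (th N)) with h | h
    · exact h
    · exfalso
      have := (Real.cos_eq_one_iff_of_lt_of_lt (x := th N) (by linarith) (by linarith)).mp h
      linarith
  unfold mu; linarith

lemma mu_le (N : ℕ) : mu N ≤ (th N)^2 := by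
  have := Real.one_sub_sq_div_two_le_cos (x := th N)
  unfold mu; linarith

lemma lmat_eig (N : ℕ) (hN : 0 < N) : ∃ v : Fin N → ℂ, v ≠ 0 ∧
    (Lmat ℂ N).mulVec v = ((mu N : ℝ) : ℂ) • v := by
  set θ := th N with hθ
  have hθpos := th_pos N
  have hθle := th_le N hN
  have hpi := Real.pi_pos
  have h2N : ((2*N+1 : ℕ) : ℝ) ≠ 0 := by positivity
  refine ⟨fun i => ((Real.cos ((((i:ℕ):ℝ) + 1/2)*θ) : ℝ) : ℂ), ?_, ?_⟩
  · intro h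
    have h0 := congrFun h ⟨0, hN⟩
    simp only [Pi.zero_apply, Complex.ofReal_eq_zero] at h0
    have : (0:ℝ) < Real.cos (((((0:ℕ)):ℝ) + 1/2)*θ) := by
      apply Real.cos_pos_of_mem_Ioo
      constructor <;> push_cast <;> nlinarith
    rw [h0] at this
    exact lt_irrefl _ this
  · funext i
    have hrow : (Lmat ℂ N).mulVec (fun i => ((Real.cos ((((i:ℕ):ℝ) + 1/2)*θ) : ℝ) : ℂ)) i
        = (if (i:ℕ) = 0 then (1:ℂ) else 2) * ((Real.cos ((((i:ℕ):ℝ) + 1/2)*θ) : ℝ) : ℂ)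
          - (if h : (i : ℕ) + 1 < N then
              ((Real.cos (((((⟨(i:ℕ)+1, h⟩ : Fin N):ℕ):ℝ) + 1/2)*θ) : ℝ) : ℂ) else 0)
          - (if h : 0 < (i : ℕ) then
              ((Real.cos (((((⟨(i:ℕ)-1, lt_of_le_of_lt (Nat.pred_le _) i.2⟩ : Fin N):ℕ):ℝ) + 1/2)*θ) : ℝ) : ℂ) else 0) :=
      tridiag_mulVec (fun i : Fin N => if (i:ℕ) = 0 then (1:ℂ) else 2)
        (fun i => ((Real.cos ((((i:ℕ):ℝ) + 1/2)*θ) : ℝ) : ℂ)) i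
    set x := (((i:ℕ):ℝ) + 1/2)*θ with hx
    have h2N' : (2*(N:ℝ)+1) ≠ 0 := by positivity
    have hnext : (if h : (i : ℕ) + 1 < N then
        ((Real.cos (((((⟨(i:ℕ)+1, h⟩ : Fin N):ℕ):ℝ) + 1/2)*θ) : ℝ) : ℂ) else 0)
        = ((Real.cos (x + θ) : ℝ) : ℂ) := by
      split_ifs with h
      · congr 2
        push_cast
        ring
      · have hi1 : (i:ℕ) + 1 = N := by have := i.2; omega
        have hiN : ((i:ℕ):ℝ) = (N:ℝ) - 1 := by
          have := congrArg (Nat.cast : ℕ → ℝ) hi1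
          push_cast at this
          linarith
        have harg : x + θ = π/2 := by
          rw [hx, hiN, hθ]; unfold th; field_simp; ring
        rw [harg, Real.cos_pi_div_two]
        simp
    have hprev : ((if (i:ℕ) = 0 then (1:ℂ) else 2) * ((Real.cos x : ℝ) : ℂ)
          - (if h : 0 < (i : ℕ) then
            ((Real.cos (((((⟨(i:ℕ)-1, lt_of_le_of_lt (Nat.pred_le _) i.2⟩ : Fin N):ℕ):ℝ) + 1/2)*θ) : ℝ) : ℂ) else 0))
        = 2 * ((Real.cos x : ℝ) : ℂ) - ((Real.cos (x - θ) : ℝ) : ℂ) := by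
      by_cases h : (i:ℕ) = 0
      · rw [if_pos h, dif_neg (by omega)]
        have : x - θ = -(x) := by rw [hx, h]; push_cast; ring
        rw [this, Real.cos_neg]
        ring
      · rw [if_neg h, dif_pos (by omega)]
        congr 2
        have : (((i:ℕ) - 1 : ℕ) : ℝ) = ((i:ℕ):ℝ) - 1 := by
          have : 1 ≤ (i:ℕ) := by omega
          push_cast [this]; ring
        rw [this, hx]; ring_nf
    rw [hrow]
    show _ = ((mu N : ℝ) : ℂ) * _
    rw [sub_sub, add_comm, ← sub_sub, hprev, hnext]
    have hre : 2*Real.cos x - Real.cos (x - θ) - Real.cos (x + θ) = mu N * Real.cos x := by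
      unfold mu
      rw [← hθ, Real.cos_add, Real.cos_sub]
      ring
    calc 2 * ((Real.cos x : ℝ) : ℂ) - ((Real.cos (x - θ) : ℝ) : ℂ) - ((Real.cos (x + θ) : ℝ) : ℂ)
        = ((2*Real.cos x - Real.cos (x - θ) - Real.cos (x + θ) : ℝ) : ℂ) := by push_cast; ring
      _ = ((mu N * Real.cos x : ℝ) : ℂ) := by rw [hre]
      _ = _ := Complex.ofReal_mul _ _

lemma lbar_det_ne (M : ℕ) :
    Matrix.det ((-((mu (M+1) : ℝ) : ℂ)) • (1 : Matrix (Fin M) (Fin M) ℂ) + Lbar ℂ M) ≠ 0 := by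
  intro h
  obtain ⟨v, hv0, hveq⟩ := (Matrix.exists_mulVec_eq_zero_iff).mpr h
  set θ := th (M+1) with hθ
  have hθpos := th_pos (M+1)
  have hθle := th_le (M+1) (Nat.succ_pos M)
  have hpi := Real.pi_pos
  have hsθ : 0 < Real.sin θ := Real.sin_pos_of_pos_of_lt_pi hθpos (by linarith)
  have hrowM : ∀ i : Fin M, (Lbar ℂ M).mulVec v i = ((mu (M+1) : ℝ) : ℂ) * v i := by
    intro i
    have := congrFun hveq i
    rw [Matrix.add_mulVec, Matrix.smul_mulVec, Matrix.one_mulVec] at this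
    simp only [Pi.add_apply, Pi.smul_apply, Pi.zero_apply, smul_eq_mul, neg_mul] at this
    linear_combination this
  set w : ℕ → ℂ := fun k => if h : k < M then v ⟨k, h⟩ else 0 with hw
  have hrow : ∀ k, k < M → w (k+1) = ((2:ℂ) - ((mu (M+1) : ℝ) : ℂ)) * w k
      - (if k = 0 then 0 else w (k-1)) := by
    intro k hk
    have ht : (Lbar ℂ M).mulVec v ⟨k, hk⟩
        = 2 * v ⟨k, hk⟩ - (if h : k + 1 < M then v ⟨k + 1, h⟩ else 0)
          - (if h : 0 < k then v ⟨k - 1, lt_of_le_of_lt (Nat.pred_le _) hk⟩ else 0) :=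
      tridiag_mulVec (fun _ => (2:ℂ)) v ⟨k, hk⟩
    rw [hrowM ⟨k, hk⟩] at ht
    have hwk : w k = v ⟨k, hk⟩ := dif_pos hk
    have hnext : (if h : k + 1 < M then v ⟨k + 1, h⟩ else 0) = w (k+1) := by
      by_cases h : k + 1 < M
      · rw [dif_pos h, hw]; simp [h]
      · rw [dif_neg h, hw]; simp [h]
    have hprev : (if h : 0 < k then v ⟨k - 1, lt_of_le_of_lt (Nat.pred_le _) hk⟩ else 0)
        = (if k = 0 then 0 else w (k-1)) := by
      by_cases h : 0 < k
      · rw [dif_pos h, if_neg (by omega), hw]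
        have : k - 1 < M := lt_of_le_of_lt (Nat.pred_le _) hk
        simp [this]
      · rw [dif_neg h, if_pos (by omega)]
    rw [hnext, hprev] at ht
    rw [hwk]
    linear_combination ht
  have hmu2 : (2:ℂ) - ((mu (M+1) : ℝ) : ℂ) = 2*((Real.cos θ : ℝ) : ℂ) := by
    unfold mu
    rw [← hθ]
    push_cast
    ring
  have key : ∀ k, k ≤ M → ((Real.sin θ : ℝ) : ℂ) * w k = w 0 * ((Real.sin ((k+1)*θ) : ℝ) : ℂ) := by
    intro k
    induction k using Nat.strong_induction_on with
    | _ k ih =>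
      intro hk
      match k with
      | 0 =>
        rw [show (((0:ℕ):ℝ)+1)*θ = θ from by push_cast; ring]
        ring
      | 1 =>
        have hr0 : w 1 = ((2:ℂ) - ((mu (M+1) : ℝ) : ℂ)) * w 0 - 0 := by
          rw [hrow 0 (by omega), if_pos rfl]
        rw [show (((1:ℕ):ℝ)+1)*θ = 2*θ from by push_cast; ring, Real.sin_two_mul]
        push_cast [-Complex.ofReal_sin, -Complex.ofReal_cos]
        linear_combination ((Real.sin θ : ℝ) : ℂ) * hr0 + w 0 * ((Real.sin θ : ℝ) : ℂ) * hmu2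
      | (m+2) =>
        have h1 := ih (m+1) (by omega) (by omega)
        have h0 := ih m (by omega) (by omega)
        have hr : w (m+2) = ((2:ℂ) - ((mu (M+1) : ℝ) : ℂ)) * w (m+1) - w m := by
          have := hrow (m+1) (by omega)
          rw [if_neg (by omega)] at this
          simpa using this
        have hsinR : Real.sin (((m:ℝ)+2+1)*θ)
            = 2*Real.cos θ * Real.sin (((m:ℝ)+1+1)*θ) - Real.sin (((m:ℝ)+1)*θ) := by
          rw [show ((m:ℝ)+2+1)*θ = ((m:ℝ)+1+1)*θ + θ from by ring,
            show ((m:ℝ)+1)*θ = ((m:ℝ)+1+1)*θ - θ from by ring, Real.sin_add, Real.sin_sub]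
          ring
        have hsinC := congrArg (Complex.ofReal) hsinR
        push_cast [-Complex.ofReal_sin, -Complex.ofReal_cos] at h1 h0 hsinC ⊢
        linear_combination ((Real.sin θ : ℝ) : ℂ) * hr + ((2:ℂ) - ((mu (M+1) : ℝ) : ℂ)) * h1
          - h0 - w 0 * hsinC + w 0 * ((Real.sin (((m:ℝ)+1+1)*θ) : ℝ) : ℂ) * hmu2
  have hwM : w M = 0 := dif_neg (lt_irrefl M)
  have hMθ : 0 < Real.sin (((M:ℝ)+1)*θ) := by
    apply Real.sin_pos_of_pos_of_lt_pi
    · positivity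
    · have hb : (0:ℝ) < 2*((M:ℝ)+1)+1 := by positivity
      have hth : θ = π / (2*((M:ℝ)+1)+1) := by rw [hθ]; unfold th; push_cast; ring
      rw [hth]
      have h1 : ((M:ℝ)+1) / (2*((M:ℝ)+1)+1) < 1 := (div_lt_one hb).mpr (by linarith)
      calc ((M:ℝ)+1) * (π / (2*((M:ℝ)+1)+1)) = (((M:ℝ)+1) / (2*((M:ℝ)+1)+1)) * π := by ring
        _ < 1 * π := by nlinarith
        _ = π := one_mul π
  have hw0 : w 0 = 0 := by
    have hk := key M (le_refl M)
    rw [hwM, mul_zero] at hk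
    have hs : ((Real.sin (((M:ℝ)+1)*θ) : ℝ) : ℂ) ≠ 0 := by
      rw [Complex.ofReal_ne_zero]; exact ne_of_gt hMθ
    exact (mul_eq_zero.mp hk.symm).resolve_right hs
  have hall : ∀ k, k ≤ M → w k = 0 := by
    intro k hk
    have := key k hk
    rw [hw0, zero_mul] at this
    have hsne : ((Real.sin θ : ℝ) : ℂ) ≠ 0 := by
      rw [Complex.ofReal_ne_zero]; exact ne_of_gt hsθ
    exact (mul_eq_zero.mp this).resolve_left hsne
  apply hv0
  funext i
  have h1 : w (i:ℕ) = v i := by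
    rw [hw]
    simp [i.isLt]
  rw [Pi.zero_apply, ← h1, hall (i:ℕ) (le_of_lt i.2)]

lemma charpoly_neg_eval {n : ℕ} (A : Matrix (Fin n) (Fin n) ℂ) (x : ℂ) :
    ((-A).charpoly).eval x = Matrix.det (x • (1 : Matrix (Fin n) (Fin n) ℂ) + A) := by
  rw [Matrix.charpoly]
  have h := RingHom.map_det (Polynomial.evalRingHom x) (Matrix.charmatrix (-A))
  simp only [Polynomial.coe_evalRingHom] at h
  rw [h]
  congr 1
  ext i j
  simp only [RingHom.mapMatrix_apply, Matrix.map_apply, Matrix.charmatrix_apply,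
    Matrix.diagonal_apply, Matrix.add_apply, Matrix.smul_apply, Matrix.one_apply,
    Matrix.neg_apply, Polynomial.eval_sub, Polynomial.eval_mul, Polynomial.eval_X,
    Polynomial.eval_C, smul_eq_mul]
  split_ifs <;> simp

lemma submatrix_succ (w : ℂ) (M : ℕ) :
    ((1 : Matrix (Fin (M+1)) (Fin (M+1)) ℂ) + w • Lmat ℂ (M+1)).submatrix Fin.succ Fin.succ
      = (1 : Matrix (Fin M) (Fin M) ℂ) + w • Lbar ℂ M := by
  ext i j
  simp only [Matrix.submatrix_apply, Matrix.add_apply, Matrix.smul_apply, Matrix.one_apply,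
    Lmat, Lbar, Matrix.of_apply, Fin.val_succ, smul_eq_mul]
  by_cases hij : i = j
  · simp [hij, Fin.succ_inj]
  · have hij' : ¬ (Fin.succ i = Fin.succ j) := by simp [Fin.succ_inj, hij]
    have he : ((i:ℕ)+1+1 = (j:ℕ)+1 ∨ (j:ℕ)+1+1 = (i:ℕ)+1) = ((i:ℕ)+1 = (j:ℕ) ∨ (j:ℕ)+1 = (i:ℕ)) := by
      simp only [eq_iff_iff]; omega
    rw [if_neg hij, if_neg hij', if_neg hij, if_neg hij']
    simp only [he]

/-- If `G = PC` has a pole at `p` in the open right half-plane, then for some `N` the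
sensitivity `S_N` has a pole in the closed right half-plane (i.e. `det(I + G L_N)` vanishes
there); equivalently `sup_N ‖S_N‖_∞ = ∞`. -/
theorem unstable_pole_unbounded (G : RatFunc ℂ) (p : ℂ) (hp : 0 < p.re)
    (hpole : G.denom.eval p = 0) :
    (∃ N : ℕ, ∃ z : ℂ, 0 ≤ z.re ∧
        Matrix.det (1 + (G.eval (RingHom.id ℂ) z) • Lmat ℂ N) = 0) ∧
    (∀ K : ℝ, ∃ (N : ℕ) (hN : 0 < N), ∃ z : ℂ, 0 < z.re ∧
        K < ‖(1 + (G.eval (RingHom.id ℂ) z) • Lmat ℂ N)⁻¹ ⟨0, hN⟩ ⟨0, hN⟩‖) := by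
  classical
  have hdne : G.denom ≠ 0 := G.denom_ne_zero
  have hnum_p : G.num.eval p ≠ 0 := by
    obtain ⟨a, b, hab⟩ := RatFunc.isCoprime_num_denom G
    intro h0
    have h := congrArg (Polynomial.eval p) hab
    simp only [Polynomial.eval_add, Polynomial.eval_mul, Polynomial.eval_one, h0, hpole,
      mul_zero, add_zero, zero_add] at h
    exact one_ne_zero h.symm
  set f : ℂ → ℂ := fun z => G.denom.eval z / G.num.eval z with hf
  have hfp : f p = 0 := by simp [hf, hpole]
  have hGval : ∀ z w : ℂ, f z = w → w ≠ 0 → G.eval (RingHom.id ℂ) z = w⁻¹ := by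
    intro z w hw hw0
    have hnz : G.num.eval z ≠ 0 := by
      intro h
      apply hw0
      rw [← hw]
      simp [hf, h]
    have hdz : G.denom.eval z = w * G.num.eval z := by
      rw [← hw]
      simp only [hf]; rw [div_mul_cancel₀ _ hnz]
    show G.num.eval z / G.denom.eval z = w⁻¹
    rw [hdz, mul_comm w, ← div_div, div_self hnz, one_div]
  have hfa : AnalyticAt ℂ f p := by
    apply AnalyticAt.div
    · exact (Polynomial.differentiable _).analyticAt p
    · exact (Polynomial.differentiable _).analyticAt p
    · exact hnum_p
  have hopen : 𝓝 (0:ℂ) ≤ Filter.map f (𝓝 p) := by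
    rcases hfa.eventually_constant_or_nhds_le_map_nhds with hconst | hle
    · exfalso
      have hnum_ev : ∀ᶠ z in 𝓝 p, G.num.eval z ≠ 0 :=
        (G.num.continuousAt).eventually_ne hnum_p
      have hden_ev : ∀ᶠ z in 𝓝 p, G.denom.eval z = 0 := by
        filter_upwards [hconst, hnum_ev] with z h1 h2
        rw [hfp] at h1
        exact (div_eq_zero_iff.mp h1).resolve_right h2
      have hfin : {z : ℂ | G.denom.IsRoot z}.Finite := Polynomial.finite_setOf_isRoot hdne
      have hmem : {z : ℂ | G.denom.eval z = 0} ∈ 𝓝 p := hden_ev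
      have hclosed : IsClosed ({z : ℂ | G.denom.eval z = 0} \ {p}) :=
        (hfin.subset diff_subset).isClosed
      have hmem2 : ({z : ℂ | G.denom.eval z = 0} \ {p})ᶜ ∈ 𝓝 p :=
        hclosed.isOpen_compl.mem_nhds (by simp)
      have hall : ({p}ᶜ : Set ℂ) ∩ ({z | G.denom.eval z = 0} ∩ ({z : ℂ | G.denom.eval z = 0} \ {p})ᶜ)
          ∈ 𝓝[≠] p :=
        inter_mem self_mem_nhdsWithin (mem_nhdsWithin_of_mem_nhds (inter_mem hmem hmem2))
      obtain ⟨z, hz1, hz2, hz3⟩ := Filter.nonempty_of_mem hall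
      exact hz3 ⟨hz2, hz1⟩
    · rw [hfp] at hle
      exact hle
  have hT : f '' {z : ℂ | 0 < z.re} ∈ 𝓝 (0:ℂ) :=
    hopen (Filter.image_mem_map ((isOpen_lt continuous_const Complex.continuous_re).mem_nhds hp))
  obtain ⟨r, hr0, hball⟩ := Metric.mem_nhds_iff.mp hT
  obtain ⟨n, hn⟩ := exists_nat_gt (π / Real.sqrt r)
  have hs : 0 < Real.sqrt r := Real.sqrt_pos.mpr hr0
  have hpi := Real.pi_pos
  have hmur : mu (n+1) < r := by
    have h1 : th (n+1) < Real.sqrt r := by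
      unfold th
      rw [div_lt_iff₀ (by positivity)]
      have h2 : π < Real.sqrt r * n := by
        rw [div_lt_iff₀ hs] at hn
        linarith [hn]
      push_cast
      nlinarith [hs]
    have h2 := mu_le (n+1)
    have h3 := th_pos (n+1)
    nlinarith [Real.mul_self_sqrt hr0.le]
  set μC : ℂ := ((mu (n+1) : ℝ) : ℂ) with hμC
  have hμpos := mu_pos (n+1) (Nat.succ_pos n)
  have hμ0 : μC ≠ 0 := by
    rw [hμC, Complex.ofReal_ne_zero]
    exact ne_of_gt hμpos
  have hmball : (-μC) ∈ Metric.ball (0:ℂ) r := by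
    rw [Metric.mem_ball, dist_zero_right, norm_neg, Complex.norm_real, Real.norm_eq_abs,
      abs_of_pos hμpos]
    exact hmur
  constructor
  · obtain ⟨z, hzre, hfz⟩ := hball hmball
    refine ⟨n+1, z, le_of_lt hzre, ?_⟩
    have hg := hGval z (-μC) hfz (neg_ne_zero.mpr hμ0)
    obtain ⟨v, hv0, hveig⟩ := lmat_eig (n+1) (Nat.succ_pos n)
    apply (Matrix.exists_mulVec_eq_zero_iff).mp
    refine ⟨v, hv0, ?_⟩
    rw [Matrix.add_mulVec, Matrix.one_mulVec, Matrix.smul_mulVec, hveig, hg, smul_smul]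
    rw [show ((-μC)⁻¹ * μC) = -1 by field_simp]
    simp
  · intro K
    refine ⟨n+1, Nat.succ_pos n, ?_⟩
    set c := ‖Matrix.det ((-μC) • (1 : Matrix (Fin n) (Fin n) ℂ) + Lbar ℂ n)‖ with hc
    have hcpos : 0 < c := by
      rw [hc]
      exact norm_pos_iff.mpr (lbar_det_ne n)
    set χ := (-(Lmat ℂ (n+1))).charpoly with hχ
    have hχ0 : χ ≠ 0 := (Matrix.charpoly_monic _).ne_zero
    have hΦμ : χ.eval (-μC) = 0 := by
      rw [hχ, charpoly_neg_eval]
      apply (Matrix.exists_mulVec_eq_zero_iff).mp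
      obtain ⟨v, hv0, hveig⟩ := lmat_eig (n+1) (Nat.succ_pos n)
      refine ⟨v, hv0, ?_⟩
      rw [Matrix.add_mulVec, Matrix.smul_mulVec, Matrix.one_mulVec, hveig, ← add_smul]
      simp [hμC]
    set δ := (mu (n+1)/2) * (c/2) / (|K|+1) with hδ
    have hδ0 : 0 < δ := by
      apply div_pos (mul_pos (by linarith) (by linarith)) (by positivity)
    have e1 : ∀ᶠ w' in 𝓝[≠] (-μC), w' ∈ Metric.ball (0:ℂ) r :=
      eventually_nhdsWithin_of_eventually_nhds (Metric.isOpen_ball.eventually_mem hmball)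
    have e2 : ∀ᶠ w' in 𝓝[≠] (-μC), χ.eval w' ≠ 0 := by
      have hfin : ({x : ℂ | χ.IsRoot x} \ {-μC}).Finite :=
        (Polynomial.finite_setOf_isRoot hχ0).subset diff_subset
      have hev : ∀ᶠ w' in 𝓝 (-μC), w' ∈ ({x : ℂ | χ.IsRoot x} \ {-μC})ᶜ :=
        hfin.isClosed.isOpen_compl.eventually_mem (by simp)
      filter_upwards [eventually_nhdsWithin_of_eventually_nhds hev, self_mem_nhdsWithin]
        with w' h1 h2 h3
      exact h1 ⟨h3, h2⟩
    have e3 : ∀ᶠ w' in 𝓝[≠] (-μC), mu (n+1)/2 < ‖w'‖ := by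
      apply eventually_nhdsWithin_of_eventually_nhds
      apply (isOpen_lt continuous_const continuous_norm).eventually_mem
      show mu (n+1)/2 < ‖-μC‖
      rw [norm_neg, hμC, Complex.norm_real, Real.norm_eq_abs, abs_of_pos hμpos]
      linarith
    have e4 : ∀ᶠ w' in 𝓝[≠] (-μC), c/2 <
        ‖Matrix.det (w' • (1 : Matrix (Fin n) (Fin n) ℂ) + Lbar ℂ n)‖ := by
      apply eventually_nhdsWithin_of_eventually_nhds
      have hcont : Continuous fun w' : ℂ =>
          ‖Matrix.det (w' • (1 : Matrix (Fin n) (Fin n) ℂ) + Lbar ℂ n)‖ :=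
        continuous_norm.comp (Continuous.matrix_det
          ((continuous_id.smul continuous_const).add continuous_const))
      apply (isOpen_lt continuous_const hcont).eventually_mem
      show c/2 < ‖Matrix.det ((-μC) • (1 : Matrix (Fin n) (Fin n) ℂ) + Lbar ℂ n)‖
      rw [← hc]
      linarith
    have e5 : ∀ᶠ w' in 𝓝[≠] (-μC), ‖χ.eval w'‖ < δ := by
      apply eventually_nhdsWithin_of_eventually_nhds
      have hcont : Continuous fun w' : ℂ => ‖χ.eval w'‖ :=
        continuous_norm.comp χ.continuous
      apply (isOpen_lt hcont continuous_const).eventually_mem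
      show ‖χ.eval (-μC)‖ < δ
      rw [hΦμ]
      simpa using hδ0
    obtain ⟨w, hw1, hw2, hw3, hw4, hw5⟩ := (e1.and (e2.and (e3.and (e4.and e5)))).exists
    have hw0 : w ≠ 0 := by
      intro h
      rw [h] at hw3
      simp at hw3
      linarith
    obtain ⟨z, hzre, hfz⟩ := hball hw1
    refine ⟨z, hzre, ?_⟩
    have hg := hGval z w hfz hw0
    rw [hg]
    set A := (1 : Matrix (Fin (n+1)) (Fin (n+1)) ℂ) + w⁻¹ • Lmat ℂ (n+1) with hA
    have hAfact : A = w⁻¹ • (w • (1 : Matrix (Fin (n+1)) (Fin (n+1)) ℂ) + Lmat ℂ (n+1)) := by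
      rw [hA, smul_add, smul_smul, inv_mul_cancel₀ hw0, one_smul]
    have hΦw : Matrix.det (w • (1 : Matrix (Fin (n+1)) (Fin (n+1)) ℂ) + Lmat ℂ (n+1))
        = χ.eval w := (charpoly_neg_eval _ _).symm
    have hdetA : A.det = w⁻¹^(n+1) * χ.eval w := by
      rw [hAfact, Matrix.det_smul, hΦw, Fintype.card_fin]
    have hdetA0 : A.det ≠ 0 := by
      rw [hdetA]
      exact mul_ne_zero (pow_ne_zero _ (inv_ne_zero hw0)) hw2
    have hadj : A.adjugate 0 0
        = w⁻¹^n * Matrix.det (w • (1 : Matrix (Fin n) (Fin n) ℂ) + Lbar ℂ n) := by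
      rw [Matrix.adjugate_fin_succ_eq_det_submatrix]
      rw [show ((0 : Fin (n+1)).succAbove) = Fin.succ from Fin.succAbove_zero]
      rw [hA, submatrix_succ w⁻¹ n]
      rw [show (1 : Matrix (Fin n) (Fin n) ℂ) + w⁻¹ • Lbar ℂ n
          = w⁻¹ • (w • (1 : Matrix (Fin n) (Fin n) ℂ) + Lbar ℂ n) by
        rw [smul_add, smul_smul, inv_mul_cancel₀ hw0, one_smul]]
      rw [Matrix.det_smul, Fintype.card_fin]
      simp
    have hinv : A⁻¹ 0 0 = A.det⁻¹ * (A.adjugate 0 0) := by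
      rw [Matrix.inv_def, Ring.inverse_eq_inv]
      simp [Matrix.smul_apply, smul_eq_mul]
    have hentry : A⁻¹ 0 0
        = w * Matrix.det (w • (1 : Matrix (Fin n) (Fin n) ℂ) + Lbar ℂ n) / χ.eval w := by
      rw [hinv, hdetA, hadj]
      field_simp
      rw [pow_succ, one_div, mul_comm w, mul_assoc (w⁻¹ ^ n) w⁻¹ w, inv_mul_cancel₀ hw0, mul_one]
    have hgoal : (⟨0, Nat.succ_pos n⟩ : Fin (n+1)) = 0 := rfl
    rw [hgoal, hentry, norm_div, norm_mul]
    have hd0 : 0 < ‖χ.eval w‖ := norm_pos_iff.mpr hw2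
    rw [lt_div_iff₀ hd0]
    have hKδ : (|K|+1) * δ = (mu (n+1)/2) * (c/2) := by
      rw [hδ]
      field_simp
    nlinarith [hw3, hw4, hw5, le_abs_self K, abs_nonneg K, hd0, hcpos, hμpos,
      mul_lt_mul_of_pos_left hw5 (show (0:ℝ) < |K|+1 by positivity),
      mul_lt_mul'' hw3 hw4 (by linarith) (by linarith)]
end
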